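/- arXiv:2601.02929 — 6 statements merged into one kernel-verified Lean document; each statement's English description precedes it below -/
import Mathlib

section
/- If three points A = (cos α, sin α), B = (cos β, sin β), C = (cos γ, sin γ) are chosen with α, β, γ independent and uniformly distributed on [0, 2π), then the probability that the center (0,0) of the circle lies in the convex hull of {A, B, C} equals 1/4. Equivalently, (2π)^(−3) · ∫_{[0,2π]³} 𝟙[(0,0) ∈ convexHull ℝ {(cos α, sin α), (cos β, sin β), (cos γ, sin γ)}] d(α,β,γ) = 1/4. -/
open Real
open scoped Classical

/-- The point `(cos θ, sin θ)` on the unit circle in `ℝ²`. -/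
noncomputable def circlePt (θ : ℝ) : EuclideanSpace ℝ (Fin 2) := !₂[Real.cos θ, Real.sin θ]

/-- The point `(x, y)` in `ℝ²`. -/
noncomputable def pt2 (x y : ℝ) : EuclideanSpace ℝ (Fin 2) := !₂[x, y]

/-- The cross product `(Q − P)₁·(Y − P)₂ − (Q − P)₂·(Y − P)₁` detecting on which side of the
directed line from `P` to `Q` the point `Y` lies. -/
noncomputable def cross2 (P Q Y : EuclideanSpace ℝ (Fin 2)) : ℝ :=
  (Q - P) 0 * (Y - P) 1 - (Q - P) 1 * (Y - P) 0

/-- `R(Y, →PQ)`: equals `1` if `Y` is to the right of or on the directed line from `P` to `Q`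
(`cross2 P Q Y ≤ 0`), and `-1` otherwise. -/
noncomputable def Rside (Y P Q : EuclideanSpace ℝ (Fin 2)) : ℝ :=
  if cross2 P Q Y ≤ 0 then 1 else -1

open MeasureTheory

/-! ### Geometric part -/

lemma key_identity (α β γ : ℝ) :
    sin (γ - β) • circlePt α + sin (α - γ) • circlePt β + sin (β - α) • circlePt γ = 0 := by
  ext i
  fin_cases i <;>
    simp [circlePt, PiLp.add_apply, PiLp.smul_apply, Real.sin_sub, Real.cos_sub] <;> ring

lemma exists_weights {A B C : EuclideanSpace ℝ (Fin 2)}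
    (h : (0 : EuclideanSpace ℝ (Fin 2)) ∈ convexHull ℝ {A, B, C}) :
    ∃ w1 w2 w3 : ℝ, 0 ≤ w1 ∧ 0 ≤ w2 ∧ 0 ≤ w3 ∧ w1 + w2 + w3 = 1 ∧
      w1 • A + w2 • B + w3 • C = 0 := by
  rw [convexHull_insert ⟨B, by simp⟩, mem_convexJoin] at h
  obtain ⟨a, ha, z, hz, hseg⟩ := h
  rw [Set.mem_singleton_iff] at ha
  subst ha
  rw [convexHull_pair] at hz
  obtain ⟨c, d, hc, hd, hcd, hzeq⟩ := hz
  obtain ⟨s, t, hs, ht, hst, hseq⟩ := hseg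
  refine ⟨s, t * c, t * d, hs, mul_nonneg ht hc, mul_nonneg ht hd, by nlinarith, ?_⟩
  rw [← hseq, ← hzeq]
  module

lemma wz1 {w x w' x' : ℝ} (hw : 0 ≤ w) (hx : x < 0) (hw' : 0 ≤ w') (hx' : 0 ≤ x')
    (h : w * x = w' * x') : w = 0 := by nlinarith
lemma wz2 {w x w' x' : ℝ} (hw : 0 ≤ w) (hx : 0 < x) (hw' : 0 ≤ w') (hx' : x' ≤ 0)
    (h : w * x = w' * x') : w = 0 := by nlinarith

lemma sign_helper {s1 s2 s3 w1 w2 w3 : ℝ}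
    (hw1 : 0 ≤ w1) (hw2 : 0 ≤ w2) (hw3 : 0 ≤ w3)
    (E1 : w1 * s1 = w3 * s2) (E2 : w2 * s1 = w3 * s3) (E3 : w1 * s3 = w2 * s2)
    (hA : ¬(w2 = 0 ∧ w3 = 0)) (hB : ¬(w1 = 0 ∧ w3 = 0)) (hC : ¬(w1 = 0 ∧ w2 = 0)) :
    (0 ≤ s1 ∧ 0 ≤ s2 ∧ 0 ≤ s3) ∨ (s1 ≤ 0 ∧ s2 ≤ 0 ∧ s3 ≤ 0) := by
  rcases le_total 0 s1 with h1 | h1 <;> rcases le_total 0 s2 with h2 | h2 <;>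
    rcases le_total 0 s3 with h3 | h3
  · exact Or.inl ⟨h1, h2, h3⟩
  · rcases h3.lt_or_eq with h3' | h3'
    · exact absurd ⟨wz1 hw1 h3' hw2 h2 E3, wz1 hw3 h3' hw2 h1 E2.symm⟩ hB
    · exact Or.inl ⟨h1, h2, h3'.symm.le⟩
  · rcases h2.lt_or_eq with h2' | h2'
    · exact absurd ⟨wz1 hw2 h2' hw1 h3 E3.symm, wz1 hw3 h2' hw1 h1 E1.symm⟩ hA
    · exact Or.inl ⟨h1, h2'.symm.le, h3⟩
  · rcases (lt_or_eq_of_le h1) with h1' | h1'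
    · exact absurd ⟨wz2 hw1 h1' hw3 h2 E1, wz2 hw2 h1' hw3 h3 E2⟩ hC
    · exact Or.inr ⟨h1'.symm.le, h2, h3⟩
  · rcases h1.lt_or_eq with h1' | h1'
    · exact absurd ⟨wz1 hw1 h1' hw3 h2 E1, wz1 hw2 h1' hw3 h3 E2⟩ hC
    · exact Or.inl ⟨h1'.symm.le, h2, h3⟩
  · rcases (lt_or_eq_of_le h2) with h2' | h2'
    · exact absurd ⟨wz2 hw2 h2' hw1 h3 E3.symm, wz2 hw3 h2' hw1 h1 E1.symm⟩ hA
    · exact Or.inr ⟨h1, h2'.symm.le, h3⟩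
  · rcases (lt_or_eq_of_le h3) with h3' | h3'
    · exact absurd ⟨wz2 hw1 h3' hw2 h2 E3, wz2 hw3 h3' hw2 h1 E2.symm⟩ hB
    · exact Or.inr ⟨h1, h2, h3'.symm.le⟩
  · exact Or.inr ⟨h1, h2, h3⟩

lemma hull_forward (α β γ : ℝ)
    (h : (0 : EuclideanSpace ℝ (Fin 2)) ∈ convexHull ℝ {circlePt α, circlePt β, circlePt γ}) :
    (0 ≤ sin (β - α) ∧ 0 ≤ sin (γ - β) ∧ 0 ≤ sin (α - γ)) ∨
    (sin (β - α) ≤ 0 ∧ sin (γ - β) ≤ 0 ∧ sin (α - γ) ≤ 0) := by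
  obtain ⟨w1, w2, w3, hw1, hw2, hw3, hsum, hvec⟩ := exists_weights h
  have e0 : w1 * cos α + w2 * cos β + w3 * cos γ = 0 := by
    simpa [circlePt, PiLp.add_apply, PiLp.smul_apply] using congrArg (· 0) hvec
  have e1 : w1 * sin α + w2 * sin β + w3 * sin γ = 0 := by
    simpa [circlePt, PiLp.add_apply, PiLp.smul_apply] using congrArg (· 1) hvec
  have E1 : w1 * sin (β - α) = w3 * sin (γ - β) := by
    rw [Real.sin_sub, Real.sin_sub]; linear_combination sin β * e0 - cos β * e1
  have E2 : w2 * sin (β - α) = w3 * sin (α - γ) := by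
    rw [Real.sin_sub, Real.sin_sub]; linear_combination cos α * e1 - sin α * e0
  have E3 : w1 * sin (α - γ) = w2 * sin (γ - β) := by
    rw [Real.sin_sub, Real.sin_sub]; linear_combination cos γ * e1 - sin γ * e0
  have pyth : ∀ θ : ℝ, ¬(sin θ = 0 ∧ cos θ = 0) := by
    intro θ ⟨hs, hc⟩
    have := sin_sq_add_cos_sq θ
    rw [hs, hc] at this; norm_num at this
  refine sign_helper hw1 hw2 hw3 E1 E2 E3 ?_ ?_ ?_
  · rintro ⟨h2, h3⟩
    rw [h2, h3, show w1 = 1 by linarith] at e0 e1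
    exact pyth α ⟨by linarith, by linarith⟩
  · rintro ⟨h1, h3⟩
    rw [h1, h3, show w2 = 1 by linarith] at e0 e1
    exact pyth β ⟨by linarith, by linarith⟩
  · rintro ⟨h1, h2⟩
    rw [h1, h2, show w3 = 1 by linarith] at e0 e1
    exact pyth γ ⟨by linarith, by linarith⟩

lemma mem_of_weights (α β γ : ℝ) (w1 w2 w3 : ℝ) (h1 : 0 ≤ w1) (h2 : 0 ≤ w2) (h3 : 0 ≤ w3)
    (hpos : 0 < w1 + w2 + w3)
    (hid : w1 • circlePt α + w2 • circlePt β + w3 • circlePt γ = 0) :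
    (0 : EuclideanSpace ℝ (Fin 2)) ∈ convexHull ℝ {circlePt α, circlePt β, circlePt γ} := by
  have hcm : (Finset.univ : Finset (Fin 3)).centerMass ![w1, w2, w3]
      ![circlePt α, circlePt β, circlePt γ] = 0 := by
    rw [Finset.centerMass, Fin.sum_univ_three, Fin.sum_univ_three]
    simp only [Matrix.cons_val_zero, Matrix.cons_val_one, Matrix.head_cons,
      Matrix.cons_val_two, Matrix.tail_cons]
    rw [hid, smul_zero]
  rw [← hcm]
  exact Finset.centerMass_mem_convexHull _
    (by intro i _; fin_cases i <;> simpa using ‹_›)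
    (by rw [Fin.sum_univ_three]; simpa using hpos)
    (by intro i _; fin_cases i <;> simp)

lemma hull_backward (α β γ : ℝ)
    (hne : ¬(sin (β - α) = 0 ∧ sin (γ - β) = 0 ∧ sin (α - γ) = 0))
    (hE : (0 ≤ sin (β - α) ∧ 0 ≤ sin (γ - β) ∧ 0 ≤ sin (α - γ)) ∨
      (sin (β - α) ≤ 0 ∧ sin (γ - β) ≤ 0 ∧ sin (α - γ) ≤ 0)) :
    (0 : EuclideanSpace ℝ (Fin 2)) ∈ convexHull ℝ {circlePt α, circlePt β, circlePt γ} := by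
  rcases hE with ⟨h1, h2, h3⟩ | ⟨h1, h2, h3⟩
  · refine mem_of_weights α β γ _ _ _ h2 h3 h1 ?_ (key_identity α β γ)
    rcases h1.lt_or_eq with h | h
    · linarith
    rcases h2.lt_or_eq with h' | h'
    · linarith
    rcases h3.lt_or_eq with h'' | h''
    · linarith
    · exact absurd ⟨h.symm, h'.symm, h''.symm⟩ hne
  · refine mem_of_weights α β γ (-sin (γ - β)) (-sin (α - γ)) (-sin (β - α))
      (by linarith) (by linarith) (by linarith) ?_ ?_
    · rcases h1.lt_or_eq with h | h
      · linarith
      rcases h2.lt_or_eq with h' | h'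
      · linarith
      rcases h3.lt_or_eq with h'' | h''
      · linarith
      · exact absurd ⟨h, h', h''⟩ hne
    · have := key_identity α β γ
      rw [show (-sin (γ-β)) • circlePt α + (-sin (α-γ)) • circlePt β + (-sin (β-α)) • circlePt γ
        = -(sin (γ-β) • circlePt α + sin (α-γ) • circlePt β + sin (β-α) • circlePt γ) by module,
        this, neg_zero]

/-! ### Integration part -/

noncomputable def ind (x y : ℝ) : ℝ :=
  if (0 ≤ sin x ∧ 0 ≤ sin y ∧ sin (x + y) ≤ 0) ∨
     (sin x ≤ 0 ∧ sin y ≤ 0 ∧ 0 ≤ sin (x + y)) then 1 else 0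

noncomputable def gg (x : ℝ) : ℝ := ∫ y in (0:ℝ)..(2*π), ind x y

lemma int_congr_cnt {f g : ℝ → ℝ} {a b : ℝ} {s : Set ℝ} (hs : s.Countable)
    (h : ∀ x ∈ Set.uIoc a b, x ∉ s → f x = g x) :
    ∫ x in a..b, f x = ∫ x in a..b, g x := by
  apply intervalIntegral.integral_congr_ae
  filter_upwards [hs.ae_notMem volume] with x hx hmem
  exact h x hmem hx

lemma int_congr_Ioc {f g : ℝ → ℝ} {a b : ℝ} (h : ∀ x ∈ Set.uIoc a b, f x = g x) :
    ∫ x in a..b, f x = ∫ x in a..b, g x :=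
  intervalIntegral.integral_congr_ae (.of_forall h)

lemma sin_nonpos_pi_two_pi {t : ℝ} (h1 : π ≤ t) (h2 : t ≤ 2*π) : sin t ≤ 0 := by
  have h3 : 0 ≤ sin (t - π) := sin_nonneg_of_nonneg_of_le_pi (by linarith) (by linarith)
  have ht : sin (t - π) = -sin t := by rw [Real.sin_sub, Real.sin_pi, Real.cos_pi]; ring
  linarith

lemma sin_neg_pi_two_pi {t : ℝ} (h1 : π < t) (h2 : t < 2*π) : sin t < 0 := by
  have h3 : 0 < sin (t - π) := sin_pos_of_pos_of_lt_pi (by linarith) (by linarith)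
  have ht : sin (t - π) = -sin t := by rw [Real.sin_sub, Real.sin_pi, Real.cos_pi]; ring
  linarith

lemma ind_intervalIntegrable (x a b : ℝ) : IntervalIntegrable (ind x) volume a b := by
  rw [intervalIntegrable_iff]
  have hS : MeasurableSet {y : ℝ | (0 ≤ sin x ∧ 0 ≤ sin y ∧ sin (x + y) ≤ 0) ∨
      (sin x ≤ 0 ∧ sin y ≤ 0 ∧ 0 ≤ sin (x + y))} := by
    apply MeasurableSet.union
    · exact (MeasurableSet.const _).inter ((measurableSet_le measurable_const
        Real.measurable_sin).inter (measurableSet_le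
          (Real.measurable_sin.comp (measurable_const.add measurable_id)) measurable_const))
    · exact (MeasurableSet.const _).inter ((measurableSet_le Real.measurable_sin
        measurable_const).inter (measurableSet_le measurable_const
          (Real.measurable_sin.comp (measurable_const.add measurable_id))))
  have hfun : ind x = Set.indicator {y : ℝ | (0 ≤ sin x ∧ 0 ≤ sin y ∧ sin (x + y) ≤ 0) ∨
      (sin x ≤ 0 ∧ sin y ≤ 0 ∧ 0 ≤ sin (x + y))} (fun _ => (1:ℝ)) := by
    funext y
    simp only [ind, Set.indicator_apply, Set.mem_setOf_eq]
  have h1 : IntegrableOn (fun _ : ℝ => (1:ℝ)) (Set.uIoc a b) volume :=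
    (integrableOn_const_iff (C := (1:ℝ))).mpr (Or.inr measure_Ioc_lt_top)
  rw [hfun]
  exact h1.indicator hS

lemma ind_periodic (x : ℝ) : Function.Periodic (ind x) (2*π) := by
  intro y
  simp only [ind, show x + (y + 2*π) = (x + y) + 2*π by ring, Real.sin_add_two_pi]

lemma ind_periodic_x (y : ℝ) : Function.Periodic (fun x => ind x y) (2*π) := by
  intro x
  simp only [ind, show x + 2*π + y = (x + y) + 2*π by ring, Real.sin_add_two_pi]

lemma shift_integral {f : ℝ → ℝ} (hf : Function.Periodic f (2*π)) (β : ℝ) :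
    ∫ γ in (0:ℝ)..(2*π), f (γ - β) = ∫ y in (0:ℝ)..(2*π), f y := by
  rw [intervalIntegral.integral_comp_sub_right f β]
  have := hf.intervalIntegral_add_eq (0 - β) 0
  rw [zero_add, show (0:ℝ) - β + 2*π = 2*π - β by ring] at this
  exact this

lemma gg_periodic : Function.Periodic gg (2*π) := by
  intro x
  unfold gg
  exact intervalIntegral.integral_congr fun y _ => ind_periodic_x y x

lemma gg_eval_lo {x : ℝ} (hx0 : 0 < x) (hxπ : x < π) : gg x = x := by
  have hsx : 0 < sin x := sin_pos_of_pos_of_lt_pi hx0 hxπ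
  have hπ := pi_pos
  unfold gg
  rw [← intervalIntegral.integral_add_adjacent_intervals (b := π - x)
        (ind_intervalIntegrable x 0 (π - x)) (ind_intervalIntegrable x (π - x) (2*π)),
      ← intervalIntegral.integral_add_adjacent_intervals (a := π - x) (b := π)
        (ind_intervalIntegrable x (π - x) π) (ind_intervalIntegrable x π (2*π))]
  have e1 : ∫ y in (0:ℝ)..(π - x), ind x y = ∫ y in (0:ℝ)..(π - x), (0:ℝ) := by
    apply int_congr_cnt (Set.countable_singleton (π - x))
    intro y hy hyne
    rw [Set.uIoc_of_le (by linarith)] at hy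
    have hylt : y < π - x := lt_of_le_of_ne hy.2 hyne
    have hxy : 0 < sin (x + y) := sin_pos_of_pos_of_lt_pi (by linarith [hy.1]) (by linarith)
    rw [ind, if_neg]
    rintro (⟨-, -, h⟩ | ⟨h, -, -⟩) <;> linarith
  have e2 : ∫ y in (π - x)..π, ind x y = ∫ y in (π - x)..π, (1:ℝ) := by
    apply int_congr_Ioc
    intro y hy
    rw [Set.uIoc_of_le (by linarith)] at hy
    have h1 : 0 ≤ sin y := sin_nonneg_of_nonneg_of_le_pi (by linarith [hy.1]) hy.2
    have h2 : sin (x + y) ≤ 0 := sin_nonpos_pi_two_pi (by linarith [hy.1]) (by linarith [hy.2])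
    rw [ind, if_pos (Or.inl ⟨hsx.le, h1, h2⟩)]
  have e3 : ∫ y in π..(2*π), ind x y = ∫ y in π..(2*π), (0:ℝ) := by
    apply int_congr_cnt (Set.countable_singleton (2*π))
    intro y hy hyne
    rw [Set.uIoc_of_le (by linarith)] at hy
    have hylt : y < 2*π := lt_of_le_of_ne hy.2 hyne
    have h1 : sin y < 0 := sin_neg_pi_two_pi hy.1 hylt
    rw [ind, if_neg]
    rintro (⟨-, h, -⟩ | ⟨h, -, -⟩) <;> linarith
  rw [e1, e2, e3]
  simp

lemma gg_eval_hi {x : ℝ} (hx0 : π < x) (hxπ : x < 2*π) : gg x = 2*π - x := by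
  have hsx : sin x < 0 := sin_neg_pi_two_pi hx0 hxπ
  have hπ := pi_pos
  unfold gg
  rw [← intervalIntegral.integral_add_adjacent_intervals (b := π)
        (ind_intervalIntegrable x 0 π) (ind_intervalIntegrable x π (2*π)),
      ← intervalIntegral.integral_add_adjacent_intervals (a := π) (b := 3*π - x)
        (ind_intervalIntegrable x π (3*π - x)) (ind_intervalIntegrable x (3*π - x) (2*π))]
  have e1 : ∫ y in (0:ℝ)..π, ind x y = ∫ y in (0:ℝ)..π, (0:ℝ) := by
    apply int_congr_cnt (Set.countable_singleton π)
    intro y hy hyne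
    rw [Set.uIoc_of_le (by linarith)] at hy
    have hylt : y < π := lt_of_le_of_ne hy.2 hyne
    have h1 : 0 < sin y := sin_pos_of_pos_of_lt_pi hy.1 hylt
    rw [ind, if_neg]
    rintro (⟨h, -, -⟩ | ⟨-, h, -⟩) <;> linarith
  have e2 : ∫ y in π..(3*π - x), ind x y = ∫ y in π..(3*π - x), (1:ℝ) := by
    apply int_congr_Ioc
    intro y hy
    rw [Set.uIoc_of_le (by linarith)] at hy
    have h1 : sin y ≤ 0 := sin_nonpos_pi_two_pi hy.1.le (by linarith [hy.2])
    have h2 : 0 ≤ sin (x + y) := by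
      have heq : sin (x + y) = sin (x + y - 2*π) := by
        have h' := Real.sin_add_two_pi (x + y - 2*π)
        rw [show x + y - 2*π + 2*π = x + y by ring] at h'
        exact h'
      rw [heq]
      exact sin_nonneg_of_nonneg_of_le_pi (by linarith [hy.1]) (by linarith [hy.2])
    rw [ind, if_pos (Or.inr ⟨hsx.le, h1, h2⟩)]
  have e3 : ∫ y in (3*π - x)..(2*π), ind x y = ∫ y in (3*π - x)..(2*π), (0:ℝ) := by
    apply int_congr_cnt (Set.countable_singleton (2*π))
    intro y hy hyne
    rw [Set.uIoc_of_le (by linarith)] at hy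
    have hylt : y < 2*π := lt_of_le_of_ne hy.2 hyne
    have h1 : sin y < 0 := sin_neg_pi_two_pi (by linarith [hy.1]) hylt
    have h2 : sin (x + y) < 0 := by
      have heq : sin (x + y) = sin (x + y - 2*π) := by
        have h' := Real.sin_add_two_pi (x + y - 2*π)
        rw [show x + y - 2*π + 2*π = x + y by ring] at h'
        exact h'
      rw [heq]
      exact sin_neg_pi_two_pi (by linarith [hy.1]) (by linarith [hy.2])
    rw [ind, if_neg]
    rintro (⟨-, h, -⟩ | ⟨-, -, h⟩) <;> linarith
  rw [e1, e2, e3]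
  simp
  ring

lemma K_eval : ∫ x in (0:ℝ)..(2*π), gg x = π^2 := by
  have hπ := pi_pos
  have hmin : ∫ x in (0:ℝ)..(2*π), gg x = ∫ x in (0:ℝ)..(2*π), min x (2*π - x) := by
    apply int_congr_cnt (s := {π, 2*π}) ((Set.countable_singleton _).insert _)
    intro x hx hxs
    rw [Set.uIoc_of_le (by linarith)] at hx
    simp only [Set.mem_insert_iff, Set.mem_singleton_iff, not_or] at hxs
    rcases lt_trichotomy x π with h | h | h
    · rw [gg_eval_lo hx.1 h, min_eq_left (by linarith)]
    · exact absurd h hxs.1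
    · rw [gg_eval_hi h (lt_of_le_of_ne hx.2 hxs.2), min_eq_right (by linarith)]
  have hci : Continuous fun x : ℝ => min x (2*π - x) := by continuity
  rw [hmin,
    ← intervalIntegral.integral_add_adjacent_intervals (b := π)
      (hci.intervalIntegrable 0 π) (hci.intervalIntegrable π (2*π))]
  have p1 : ∫ x in (0:ℝ)..π, min x (2*π - x) = ∫ x in (0:ℝ)..π, x := by
    apply intervalIntegral.integral_congr
    intro x hx
    rw [Set.uIcc_of_le (by linarith)] at hx
    exact min_eq_left (by simp at hx ⊢; linarith [hx.1, hx.2])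
  have p2 : ∫ x in π..(2*π), min x (2*π - x) = ∫ x in π..(2*π), (2*π - x) := by
    apply intervalIntegral.integral_congr
    intro x hx
    rw [Set.uIcc_of_le (by linarith)] at hx
    exact min_eq_right (by simp at hx ⊢; linarith [hx.1, hx.2])
  rw [p1, p2, integral_id,
    intervalIntegral.integral_sub intervalIntegrable_const
      (continuous_id'.intervalIntegrable _ _), integral_id,
    intervalIntegral.integral_const]
  simp only [smul_eq_mul]
  ring

/-! ### Bridge -/

lemma sin_zero_countable (β : ℝ) : {γ : ℝ | sin (γ - β) = 0}.Countable := by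
  have hsub : {γ : ℝ | sin (γ - β) = 0} ⊆ Set.range (fun n : ℤ => β + n * π) := by
    intro γ hγ
    obtain ⟨n, hn⟩ := Real.sin_eq_zero_iff.mp hγ
    exact ⟨n, show β + (n:ℝ)*π = γ by linarith⟩
  exact Set.Countable.mono hsub (Set.countable_range _)

lemma inner_eq (α β : ℝ) :
    (∫ γ in (0:ℝ)..(2*π),
      if (0 : EuclideanSpace ℝ (Fin 2)) ∈ convexHull ℝ {circlePt α, circlePt β, circlePt γ}
        then (1:ℝ) else 0) = gg (β - α) := by
  have h1 : (∫ γ in (0:ℝ)..(2*π),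
      if (0 : EuclideanSpace ℝ (Fin 2)) ∈ convexHull ℝ {circlePt α, circlePt β, circlePt γ}
        then (1:ℝ) else 0) = ∫ γ in (0:ℝ)..(2*π), ind (β - α) (γ - β) := by
    apply int_congr_cnt (sin_zero_countable β)
    intro γ _ hγ
    have hγ' : sin (γ - β) ≠ 0 := hγ
    have hne : ¬(sin (β - α) = 0 ∧ sin (γ - β) = 0 ∧ sin (α - γ) = 0) :=
      fun h => hγ' h.2.1
    have hxy : sin ((β - α) + (γ - β)) = -sin (α - γ) := by
      rw [show (β - α) + (γ - β) = -(α - γ) by ring, Real.sin_neg]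
    rw [ind]
    apply if_congr ?_ rfl rfl
    constructor
    · intro h
      rcases hull_forward α β γ h with ⟨a, b, c⟩ | ⟨a, b, c⟩
      · exact Or.inl ⟨a, b, by linarith⟩
      · exact Or.inr ⟨a, b, by linarith⟩
    · intro h
      apply hull_backward α β γ hne
      rcases h with ⟨a, b, c⟩ | ⟨a, b, c⟩
      · exact Or.inl ⟨a, b, by linarith⟩
      · exact Or.inr ⟨a, b, by linarith⟩
  rw [h1]
  exact shift_integral (ind_periodic (β - α)) β

theorem inscribed_triangle_contains_center :
    (2*π)⁻¹^3 * (∫ α in (0:ℝ)..(2*π), ∫ β in (0:ℝ)..(2*π), ∫ γ in (0:ℝ)..(2*π),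
      if (0 : EuclideanSpace ℝ (Fin 2)) ∈ convexHull ℝ {circlePt α, circlePt β, circlePt γ}
        then (1:ℝ) else 0)
    = 1/4 := by
  have hπ : (π : ℝ) ≠ 0 := pi_ne_zero
  have hmain : (∫ α in (0:ℝ)..(2*π), ∫ β in (0:ℝ)..(2*π), ∫ γ in (0:ℝ)..(2*π),
      if (0 : EuclideanSpace ℝ (Fin 2)) ∈ convexHull ℝ {circlePt α, circlePt β, circlePt γ}
        then (1:ℝ) else 0) = ∫ α in (0:ℝ)..(2*π), (π^2 : ℝ) := by
    apply intervalIntegral.integral_congr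
    intro α _
    dsimp only
    have hb : (∫ β in (0:ℝ)..(2*π), ∫ γ in (0:ℝ)..(2*π),
        if (0 : EuclideanSpace ℝ (Fin 2)) ∈ convexHull ℝ {circlePt α, circlePt β, circlePt γ}
          then (1:ℝ) else 0) = ∫ β in (0:ℝ)..(2*π), gg (β - α) :=
      intervalIntegral.integral_congr fun β _ => inner_eq α β
    rw [hb, shift_integral gg_periodic α, K_eval]
  rw [hmain, intervalIntegral.integral_const]
  simp only [smul_eq_mul]
  field_simp
  ring
end

section
/- Let A, B, C be three points on the unit circle in ℝ² that are not all equal and form a nondegenerate triangle. The center (0,0) lies in the convex hull of {A, B, C} if and only if all three angles of the triangle ABC are at most π/2 (the triangle is non-obtuse). -/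
open Real

private lemma angle_le_iff_inner_nonneg {E : Type*} [NormedAddCommGroup E]
    [InnerProductSpace ℝ E] (v w : E) :
    InnerProductGeometry.angle v w ≤ π/2 ↔ 0 ≤ (inner ℝ v w : ℝ) := by
  rw [InnerProductGeometry.angle, Real.arccos_le_pi_div_two]
  rcases eq_or_lt_of_le (mul_nonneg (norm_nonneg v) (norm_nonneg w)) with h | h
  · constructor
    · intro _
      rcases mul_eq_zero.1 h.symm with h' | h' <;> simp [norm_eq_zero.1 h']
    · intro _; rw [← h]; simp
  · rw [div_nonneg_iff]
    constructor
    · rintro (⟨h1, _⟩ | ⟨_, h2⟩)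
      · exact h1
      · nlinarith
    · intro h1; exact Or.inl ⟨h1, h.le⟩


private lemma sq_add_sq_eq_zero {u v : ℝ} (h : u^2 + v^2 = 0) : u = 0 ∧ v = 0 := by
  constructor <;> nlinarith [sq_nonneg u, sq_nonneg v]

/-- key identity: the circumcenter-barycentric combination vanishes (first coordinate). -/
private lemma comb_identity (a0 a1 b0 b1 c0 c1 : ℝ)
    (hA2 : a0^2 + a1^2 = 1) (hB2 : b0^2 + b1^2 = 1) (hC2 : c0^2 + c1^2 = 1) :
    (1 - (b0*c0 + b1*c1)) * ((b0-a0)*(c0-a0) + (b1-a1)*(c1-a1)) * a0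
    + (1 - (a0*c0 + a1*c1)) * ((a0-b0)*(c0-b0) + (a1-b1)*(c1-b1)) * b0
    + (1 - (a0*b0 + a1*b1)) * ((a0-c0)*(b0-c0) + (a1-c1)*(b1-c1)) * c0 = 0 := by
  linear_combination (a0 - b0 - c0 + b0*c0^2 + b1*c0*c1 + b0*b1*c1 + b0^2*c0
      - a0*b1*c1 - a0*b0*c0) * hA2
    + (b0 - a0 + a1*c0*c1 - a1*b0*c1 - a1^2*c0 + a0*c0^2 - a0*b0*c0 + a0*a1*c1) * hB2
    + (c0 - a1*b1*c0 + a1*b0*b1 - a1^2*b0 - a0*b1^2 - a0*b0*c0 + a0*a1*b1) * hC2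

/-- forward direction, one corner. -/
private lemma corner_nonneg (a0 a1 b0 b1 c0 c1 a b c : ℝ)
    (hA2 : a0^2 + a1^2 = 1) (hB2 : b0^2 + b1^2 = 1) (hC2 : c0^2 + c1^2 = 1)
    (ha : 0 ≤ a) (hsum : a + b + c = 1)
    (h0 : a*a0 + b*b0 + c*c0 = 0) (h1 : a*a1 + b*b1 + c*c1 = 0) :
    0 ≤ (b0-a0)*(c0-a0) + (b1-a1)*(c1-a1) := by
  set x : ℝ := b0*c0 + b1*c1 with hx
  have key : a * ((b0-a0)*(c0-a0) + (b1-a1)*(c1-a1)) = 1 + x := by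
    linear_combination (-(b0+c0))*h0 + (-(b1+c1))*h1 + (1+x)*hsum + a*hA2 + b*hB2 + c*hC2
  rcases eq_or_lt_of_le (show (0:ℝ) ≤ 1 + x by
      nlinarith [sq_nonneg (b0+c0), sq_nonneg (b1+c1)]) with h | h
  · -- 1 + x = 0 : B = -C, the corner inner product is zero
    have hsq : (b0+c0)^2 + (b1+c1)^2 = 0 := by linear_combination hB2 + hC2 - 2*h
    have hc0 : b0 + c0 = 0 := by nlinarith [sq_nonneg (b0+c0), sq_nonneg (b1+c1)]
    have hc1 : b1 + c1 = 0 := by nlinarith [sq_nonneg (b0+c0), sq_nonneg (b1+c1)]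
    have : (b0-a0)*(c0-a0) + (b1-a1)*(c1-a1) = 0 := by
      linear_combination hA2 - hB2 + (b0-a0)*hc0 + (b1-a1)*hc1
    linarith
  · nlinarith [key, ha]

theorem center_mem_convexHull_iff_nonobtuse (A B C : EuclideanSpace ℝ (Fin 2))
    (hA : ‖A‖ = 1) (hB : ‖B‖ = 1) (hC : ‖C‖ = 1)
    (hnd : AffineIndependent ℝ ![A, B, C]) :
    (0 : EuclideanSpace ℝ (Fin 2)) ∈ convexHull ℝ {A, B, C} ↔
      InnerProductGeometry.angle (B - A) (C - A) ≤ π/2 ∧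
      InnerProductGeometry.angle (A - B) (C - B) ≤ π/2 ∧
      InnerProductGeometry.angle (A - C) (B - C) ≤ π/2 := by
  classical
  have hinj := hnd.injective
  have hAB : A ≠ B := fun h => absurd (hinj (show ![A,B,C] 0 = ![A,B,C] 1 by simpa using h)) (by decide)
  have hAC : A ≠ C := fun h => absurd (hinj (show ![A,B,C] 0 = ![A,B,C] 2 by simpa using h)) (by decide)
  have hBC : B ≠ C := fun h => absurd (hinj (show ![A,B,C] 1 = ![A,B,C] 2 by simpa using h)) (by decide)
  have hA2 : A 0 ^ 2 + A 1 ^ 2 = 1 := by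
    have h : (inner ℝ A A : ℝ) = 1 := by rw [real_inner_self_eq_norm_sq, hA]; norm_num
    simp only [PiLp.inner_apply, Fin.sum_univ_two, RCLike.inner_apply, conj_trivial] at h
    linear_combination h
  have hB2 : B 0 ^ 2 + B 1 ^ 2 = 1 := by
    have h : (inner ℝ B B : ℝ) = 1 := by rw [real_inner_self_eq_norm_sq, hB]; norm_num
    simp only [PiLp.inner_apply, Fin.sum_univ_two, RCLike.inner_apply, conj_trivial] at h
    linear_combination h
  have hC2 : C 0 ^ 2 + C 1 ^ 2 = 1 := by
    have h : (inner ℝ C C : ℝ) = 1 := by rw [real_inner_self_eq_norm_sq, hC]; norm_num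
    simp only [PiLp.inner_apply, Fin.sum_univ_two, RCLike.inner_apply, conj_trivial] at h
    linear_combination h
  have hiA : (inner ℝ (B - A) (C - A) : ℝ)
      = (B 0 - A 0) * (C 0 - A 0) + (B 1 - A 1) * (C 1 - A 1) := by
    simp [PiLp.inner_apply, Fin.sum_univ_two, RCLike.inner_apply]; ring
  have hiB : (inner ℝ (A - B) (C - B) : ℝ)
      = (A 0 - B 0) * (C 0 - B 0) + (A 1 - B 1) * (C 1 - B 1) := by
    simp [PiLp.inner_apply, Fin.sum_univ_two, RCLike.inner_apply]; ring
  have hiC : (inner ℝ (A - C) (B - C) : ℝ)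
      = (A 0 - C 0) * (B 0 - C 0) + (A 1 - C 1) * (B 1 - C 1) := by
    simp [PiLp.inner_apply, Fin.sum_univ_two, RCLike.inner_apply]; ring
  rw [angle_le_iff_inner_nonneg, angle_le_iff_inner_nonneg, angle_le_iff_inner_nonneg,
    hiA, hiB, hiC]
  constructor
  · -- membership → nonobtuse
    intro hmem
    rw [show ({A,B,C} : Set (EuclideanSpace ℝ (Fin 2)))
        = (↑({A,B,C} : Finset (EuclideanSpace ℝ (Fin 2)))) by simp] at hmem
    rw [Finset.mem_convexHull'] at hmem
    obtain ⟨w, hw0, hw1, hw2⟩ := hmem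
    have hBmem : B ∉ ({C} : Finset (EuclideanSpace ℝ (Fin 2))) := by simpa using hBC
    have hAmem : A ∉ ({B, C} : Finset (EuclideanSpace ℝ (Fin 2))) := by simp [hAB, hAC]
    rw [show ({A,B,C} : Finset (EuclideanSpace ℝ (Fin 2)))
        = insert A (insert B {C}) from rfl, Finset.sum_insert hAmem,
      Finset.sum_insert hBmem, Finset.sum_singleton] at hw1 hw2
    have ha : 0 ≤ w A := hw0 A (by simp)
    have hb : 0 ≤ w B := hw0 B (by simp)
    have hc : 0 ≤ w C := hw0 C (by simp)
    have h0 : w A * A 0 + w B * B 0 + w C * C 0 = 0 := by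
      have h := congrArg (fun v => v 0) hw2
      simp only [PiLp.add_apply, PiLp.smul_apply, PiLp.zero_apply, smul_eq_mul] at h
      linarith [h]
    have h1 : w A * A 1 + w B * B 1 + w C * C 1 = 0 := by
      have h := congrArg (fun v => v 1) hw2
      simp only [PiLp.add_apply, PiLp.smul_apply, PiLp.zero_apply, smul_eq_mul] at h
      linarith [h]
    have hw1' : w A + w B + w C = 1 := by linarith [hw1]
    exact ⟨corner_nonneg (A 0) (A 1) (B 0) (B 1) (C 0) (C 1) (w A) (w B) (w C)
        hA2 hB2 hC2 ha hw1' h0 h1,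
      corner_nonneg (B 0) (B 1) (A 0) (A 1) (C 0) (C 1) (w B) (w A) (w C)
        hB2 hA2 hC2 hb (by linarith) (by linarith) (by linarith),
      corner_nonneg (C 0) (C 1) (A 0) (A 1) (B 0) (B 1) (w C) (w A) (w B)
        hC2 hA2 hB2 hc (by linarith) (by linarith) (by linarith)⟩
  · -- nonobtuse → membership
    rintro ⟨hsA, hsB, hsC⟩
    set sA : ℝ := (B 0 - A 0) * (C 0 - A 0) + (B 1 - A 1) * (C 1 - A 1) with hsAdef
    set sB : ℝ := (A 0 - B 0) * (C 0 - B 0) + (A 1 - B 1) * (C 1 - B 1) with hsBdef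
    set sC : ℝ := (A 0 - C 0) * (B 0 - C 0) + (A 1 - C 1) * (B 1 - C 1) with hsCdef
    set wA : ℝ := (1 - (B 0 * C 0 + B 1 * C 1)) * sA with hwAdef
    set wB : ℝ := (1 - (A 0 * C 0 + A 1 * C 1)) * sB with hwBdef
    set wC : ℝ := (1 - (A 0 * B 0 + A 1 * B 1)) * sC with hwCdef
    have hxle : 0 ≤ 1 - (B 0 * C 0 + B 1 * C 1) := by
      have hq : (B 0 - C 0)^2 + (B 1 - C 1)^2 = 2 - 2*(B 0 * C 0 + B 1 * C 1) := by
        linear_combination hB2 + hC2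
      have := sq_nonneg (B 0 - C 0)
      have := sq_nonneg (B 1 - C 1)
      linarith
    have hyle : 0 ≤ 1 - (A 0 * C 0 + A 1 * C 1) := by
      have hq : (A 0 - C 0)^2 + (A 1 - C 1)^2 = 2 - 2*(A 0 * C 0 + A 1 * C 1) := by
        linear_combination hA2 + hC2
      have := sq_nonneg (A 0 - C 0)
      have := sq_nonneg (A 1 - C 1)
      linarith
    have hzle : 0 ≤ 1 - (A 0 * B 0 + A 1 * B 1) := by
      have hq : (A 0 - B 0)^2 + (A 1 - B 1)^2 = 2 - 2*(A 0 * B 0 + A 1 * B 1) := by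
        linear_combination hA2 + hB2
      have := sq_nonneg (A 0 - B 0)
      have := sq_nonneg (A 1 - B 1)
      linarith
    have hwA : 0 ≤ wA := mul_nonneg hxle hsA
    have hwB : 0 ≤ wB := mul_nonneg hyle hsB
    have hwC : 0 ≤ wC := mul_nonneg hzle hsC
    have htotal : 0 < wA + wB + wC := by
      rcases eq_or_lt_of_le (add_nonneg (add_nonneg hwA hwB) hwC) with h | h
      · exfalso
        have hwA0 : wA = 0 := by linarith
        have hwB0 : wB = 0 := by linarith
        have hwC0 : wC = 0 := by linarith
        have hsA0 : sA = 0 := by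
          rcases mul_eq_zero.1 hwA0.symm.symm with h' | h'
          · exfalso
            have : (B 0 - C 0)^2 + (B 1 - C 1)^2 = 0 := by linear_combination hB2 + hC2 + 2*h'
            obtain ⟨e0, e1⟩ := sq_add_sq_eq_zero this
            refine hBC ?_
            ext i
            fin_cases i
            · show B 0 = C 0
              linarith
            · show B 1 = C 1
              linarith
          · exact h'
        have hsB0 : sB = 0 := by
          rcases mul_eq_zero.1 hwB0.symm.symm with h' | h'
          · exfalso
            have : (A 0 - C 0)^2 + (A 1 - C 1)^2 = 0 := by linear_combination hA2 + hC2 + 2*h'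
            obtain ⟨e0, e1⟩ := sq_add_sq_eq_zero this
            refine hAC ?_
            ext i
            fin_cases i
            · show A 0 = C 0
              linarith
            · show A 1 = C 1
              linarith
          · exact h'
        have hsC0 : sC = 0 := by
          rcases mul_eq_zero.1 hwC0.symm.symm with h' | h'
          · exfalso
            have : (A 0 - B 0)^2 + (A 1 - B 1)^2 = 0 := by linear_combination hA2 + hB2 + 2*h'
            obtain ⟨e0, e1⟩ := sq_add_sq_eq_zero this
            refine hAB ?_
            ext i
            fin_cases i
            · show A 0 = B 0
              linarith
            · show A 1 = B 1
              linarith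
          · exact h'
        -- all corner inner products zero → degenerate
        have hdeg : (A 0 - B 0)^2 + (A 1 - B 1)^2 + ((A 0 - C 0)^2 + (A 1 - C 1)^2)
            + ((B 0 - C 0)^2 + (B 1 - C 1)^2) = 0 := by
          rw [hsAdef] at hsA0; rw [hsBdef] at hsB0; rw [hsCdef] at hsC0
          linear_combination 2*hsA0 + 2*hsB0 + 2*hsC0
        have hdeg2 : (A 0 - B 0)^2 + (A 1 - B 1)^2 = 0 := by
          have q1 := sq_nonneg (A 0 - C 0)
          have q2 := sq_nonneg (A 1 - C 1)
          have q3 := sq_nonneg (B 0 - C 0)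
          have q4 := sq_nonneg (B 1 - C 1)
          linarith [hdeg]
        obtain ⟨e0, e1⟩ := sq_add_sq_eq_zero hdeg2
        refine hAB ?_
        ext i
        fin_cases i
        · show A 0 = B 0
          linarith
        · show A 1 = B 1
          linarith
      · exact h
    set t : ℝ := wA + wB + wC with htdef
    have hI1 : wA * A 0 + wB * B 0 + wC * C 0 = 0 := by
      rw [hwAdef, hwBdef, hwCdef, hsAdef, hsBdef, hsCdef]
      exact comb_identity _ _ _ _ _ _ hA2 hB2 hC2
    have hI2 : wA * A 1 + wB * B 1 + wC * C 1 = 0 := by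
      rw [hwAdef, hwBdef, hwCdef, hsAdef, hsBdef, hsCdef]
      have := comb_identity (A 1) (A 0) (B 1) (B 0) (C 1) (C 0)
        (by linarith) (by linarith) (by linarith)
      linarith [this]
    have hvec : wA • A + wB • B + wC • C = (0 : EuclideanSpace ℝ (Fin 2)) := by
      ext i
      fin_cases i
      · show wA * A 0 + wB * B 0 + wC * C 0 = 0
        exact hI1
      · show wA * A 1 + wB * B 1 + wC * C 1 = 0
        exact hI2
    apply mem_convexHull_of_exists_fintype (ι := Fin 3) ![wA/t, wB/t, wC/t] ![A, B, C]
    · intro i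
      fin_cases i
      · exact div_nonneg hwA htotal.le
      · exact div_nonneg hwB htotal.le
      · exact div_nonneg hwC htotal.le
    · rw [Fin.sum_univ_three]
      show wA/t + wB/t + wC/t = 1
      rw [← add_div, ← add_div, ← htdef]
      exact div_self htotal.ne'
    · intro i
      fin_cases i
      · show A ∈ ({A, B, C} : Set (EuclideanSpace ℝ (Fin 2))); simp
      · show B ∈ ({A, B, C} : Set (EuclideanSpace ℝ (Fin 2))); simp
      · show C ∈ ({A, B, C} : Set (EuclideanSpace ℝ (Fin 2))); simp
    · rw [Fin.sum_univ_three]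
      show (wA/t) • A + (wB/t) • B + (wC/t) • C = 0
      have hexp : (wA/t) • A + (wB/t) • B + (wC/t) • C
          = (1/t) • (wA • A + wB • B + wC • C) := by
        module
      rw [hexp, hvec, smul_zero]
end

section
/- Let r ∈ [0, 1) and let P(r) = (2π)^(−3) ∫_{[0,2π]³} 𝟙[(r,0) ∈ convexHull ℝ {(cos α, sin α), (cos β, sin β), (cos γ, sin γ)}] d(α,β,γ). Then P(r) = 1/4 − (3/(2π³)) ∫₀^{2π} (Complex.arg(1 − r·exp(iθ)))² dθ. -/
open Real MeasureTheory
open scoped Classical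

noncomputable def Fk (r θ σ : ℝ) : ℝ := Real.sin (σ - θ) + r * Real.sin θ - r * Real.sin σ
noncomputable def chi (r t s : ℝ) : ℝ := if Fk r t s < 0 then 1 else 0
noncomputable def zc (r θ : ℝ) : ℂ := 1 - (r:ℂ) * Complex.exp (θ * Complex.I)
noncomputable def psi (r θ : ℝ) : ℝ := Complex.arg (zc r θ)

-- from t1.lean
lemma zc_re (r θ : ℝ) : (zc r θ).re = 1 - r * Real.cos θ := by
  simp [zc, Complex.exp_mul_I, Complex.cos_ofReal_re, Complex.sin_ofReal_re]

lemma zc_im (r θ : ℝ) : (zc r θ).im = -(r * Real.sin θ) := by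
  simp [zc, Complex.exp_mul_I, Complex.cos_ofReal_re, Complex.sin_ofReal_re]

lemma zc_re_pos {r : ℝ} (hr : r ∈ Set.Ico (0:ℝ) 1) (θ : ℝ) : 0 < (zc r θ).re := by
  rw [zc_re]
  nlinarith [Real.neg_one_le_cos θ, Real.cos_le_one θ, hr.1, hr.2]

lemma zc_ne_zero {r : ℝ} (hr : r ∈ Set.Ico (0:ℝ) 1) (θ : ℝ) : zc r θ ≠ 0 := by
  intro h
  have := zc_re_pos hr θ
  rw [h] at this; simp at this

lemma abs_psi_lt {r : ℝ} (hr : r ∈ Set.Ico (0:ℝ) 1) (θ : ℝ) : |psi r θ| < π/2 :=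
  Complex.abs_arg_lt_pi_div_two_iff.2 (Or.inl (zc_re_pos hr θ))

lemma psi_continuous {r : ℝ} (hr : r ∈ Set.Ico (0:ℝ) 1) : Continuous (psi r) := by
  rw [continuous_iff_continuousAt]
  intro θ
  have h1 : Continuous (zc r) := by
    unfold zc; continuity
  exact (Complex.continuousAt_arg (Or.inl (zc_re_pos hr θ))).comp h1.continuousAt

-- from t2.lean
lemma Fk_eq1 (r θ σ : ℝ) : Fk r θ σ =
    2 * Real.sin ((σ - θ)/2) *
      (Real.cos ((σ - θ)/2) * (zc r θ).re - Real.sin ((σ - θ)/2) * (zc r θ).im) := by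
  rw [zc_re, zc_im]
  set u := (σ - θ)/2 with hu
  have hσ : σ = θ + 2*u := by rw [hu]; ring
  rw [Fk, hσ]
  have h1 : θ + 2*u - θ = 2*u := by ring
  rw [h1, Real.sin_two_mul, Real.sin_add, Real.sin_two_mul, Real.cos_two_mul]
  linear_combination (-2*r*Real.sin θ) * (Real.sin_sq_add_cos_sq u)

lemma Fk_eq2 {r : ℝ} (hr : r ∈ Set.Ico (0:ℝ) 1) (θ σ : ℝ) : Fk r θ σ =
    2 * Real.sin ((σ - θ)/2) * ‖zc r θ‖ * Real.cos ((σ - θ)/2 + psi r θ) := by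
  rw [Fk_eq1, Real.cos_add]
  have hz := zc_ne_zero hr θ
  have h1 := Complex.norm_mul_cos_arg (zc r θ)
  have h2 := Complex.norm_mul_sin_arg (zc r θ)
  rw [psi]
  linear_combination (-2*Real.sin ((σ - θ)/2)*Real.cos ((σ - θ)/2))*h1 + (2*Real.sin ((σ - θ)/2)^2)*h2

-- from t3.lean
lemma Fk_antisymm (r θ σ : ℝ) : Fk r σ θ = - Fk r θ σ := by
  unfold Fk
  have : θ - σ = -(σ - θ) := by ring
  rw [this, Real.sin_neg]; ring

lemma Fk_pos {r : ℝ} (hr : r ∈ Set.Ico (0:ℝ) 1) {θ σ : ℝ}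
    (h1 : θ < σ) (h2 : σ < θ + (π - 2 * psi r θ)) : 0 < Fk r θ σ := by
  rw [Fk_eq2 hr]
  have hψ := abs_psi_lt hr θ
  rw [abs_lt] at hψ
  have hpi := Real.pi_pos
  have hs : 0 < Real.sin ((σ - θ)/2) := by
    apply Real.sin_pos_of_pos_of_lt_pi <;> [linarith; linarith]
  have hc : 0 < Real.cos ((σ - θ)/2 + psi r θ) := by
    apply Real.cos_pos_of_mem_Ioo
    rw [Set.mem_Ioo]
    constructor <;> linarith
  have habs : 0 < ‖zc r θ‖ := by
    simpa [norm_pos_iff] using zc_ne_zero hr θ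
  positivity

lemma Fk_neg {r : ℝ} (hr : r ∈ Set.Ico (0:ℝ) 1) {θ σ : ℝ}
    (h1 : θ + (π - 2 * psi r θ) < σ) (h2 : σ < θ + 2*π) : Fk r θ σ < 0 := by
  rw [Fk_eq2 hr]
  have hψ := abs_psi_lt hr θ
  rw [abs_lt] at hψ
  have hpi := Real.pi_pos
  have hs : 0 < Real.sin ((σ - θ)/2) := by
    apply Real.sin_pos_of_pos_of_lt_pi <;> linarith
  have hc : Real.cos ((σ - θ)/2 + psi r θ) < 0 := by
    apply Real.cos_neg_of_pi_div_two_lt_of_lt <;> linarith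
  have habs : 0 < ‖zc r θ‖ := by
    simpa [norm_pos_iff] using zc_ne_zero hr θ
  have hpos : 0 < 2 * Real.sin ((σ - θ)/2) * ‖zc r θ‖ := by positivity
  exact mul_neg_of_pos_of_neg hpos hc

lemma Fk_periodic (r t : ℝ) : Function.Periodic (Fk r t) (2*π) := by
  intro s
  unfold Fk
  have h1 : s + 2*π - t = (s - t) + 2*π := by ring
  rw [h1, Real.sin_add_two_pi, Real.sin_add_two_pi]

lemma Fk_self (r t : ℝ) : Fk r t t = 0 := by simp [Fk]

lemma Fk_zero_iff {r : ℝ} (hr : r ∈ Set.Ico (0:ℝ) 1) {t s : ℝ}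
    (h1 : t < s) (h2 : s < t + 2*π) (h : Fk r t s = 0) : s = t + (π - 2 * psi r t) := by
  rcases lt_trichotomy s (t + (π - 2 * psi r t)) with hlt | heq | hgt
  · exact absurd h (ne_of_gt (Fk_pos hr h1 hlt))
  · exact heq
  · exact absurd h (ne_of_lt (Fk_neg hr hgt h2))

-- from t6.lean
lemma Fk_eq_det (r θ σ : ℝ) :
    Fk r θ σ = (Real.cos θ - r) * Real.sin σ - Real.sin θ * (Real.cos σ - r) := by
  unfold Fk; rw [Real.sin_sub]; ring

lemma combo_coords {r u v w α β γ : ℝ}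
    (h : u * Real.cos α + v * Real.cos β + w * Real.cos γ = r)
    (h2 : u * Real.sin α + v * Real.sin β + w * Real.sin γ = 0) :
    pt2 r 0 = u • circlePt α + v • circlePt β + w • circlePt γ := by
  ext i
  fin_cases i
  · simp only [pt2, circlePt, PiLp.toLp_apply, PiLp.add_apply, PiLp.smul_apply, smul_eq_mul,
      Matrix.cons_val_zero, Fin.mk_zero, Fin.mk_one]
    linarith
  · simp only [pt2, circlePt, PiLp.toLp_apply, PiLp.add_apply, PiLp.smul_apply, smul_eq_mul,
      Matrix.cons_val_one, Matrix.head_cons, Matrix.cons_val_zero, Fin.mk_zero, Fin.mk_one]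
    linarith

lemma mem_convexHull_triple {E : Type*} [AddCommGroup E] [Module ℝ E]
    {A B C P : E} {u v w : ℝ} (hu : 0 ≤ u) (hv : 0 ≤ v) (hw : 0 ≤ w)
    (hsum : u + v + w = 1) (hP : P = u • A + v • B + w • C) :
    P ∈ convexHull ℝ ({A, B, C} : Set E) := by
  by_cases hvw : v + w = 0
  · have hv0 : v = 0 := by linarith
    have hw0 : w = 0 := by linarith
    have hu1 : u = 1 := by linarith
    have : P = A := by rw [hP, hv0, hw0, hu1]; simp
    rw [this]
    exact subset_convexHull ℝ _ (by simp)
  · have hvw' : 0 < v + w := lt_of_le_of_ne (by linarith) (Ne.symm hvw)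
    set Z : E := (v/(v+w)) • B + (w/(v+w)) • C with hZ
    have hZmem : Z ∈ convexHull ℝ ({A, B, C} : Set E) := by
      apply segment_subset_convexHull (by simp : B ∈ ({A,B,C} : Set E))
        (by simp : C ∈ ({A,B,C} : Set E))
      exact ⟨v/(v+w), w/(v+w), by positivity, by positivity, by field_simp, rfl⟩
    have hAmem : A ∈ convexHull ℝ ({A, B, C} : Set E) :=
      subset_convexHull ℝ _ (by simp)
    have hP' : P = u • A + (v+w) • Z := by
      rw [hP, hZ, smul_add, smul_smul, smul_smul]
      rw [mul_div_cancel₀ _ hvw, mul_div_cancel₀ _ hvw]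
      abel
    rw [hP']
    exact convex_convexHull ℝ _ hAmem hZmem hu (le_of_lt hvw') (by linarith)

lemma Gmem {r : ℝ} {α β γ : ℝ}
    (ha : 0 < Fk r α β) (hb : 0 < Fk r β γ) (hc : 0 < Fk r γ α) :
    pt2 r 0 ∈ convexHull ℝ {circlePt α, circlePt β, circlePt γ} := by
  set a := Fk r α β with hadef
  set b := Fk r β γ with hbdef
  set c := Fk r γ α with hcdef
  have hD : 0 < a + b + c := by linarith
  have k1 : b * Real.cos α + c * Real.cos β + a * Real.cos γ = (a + b + c) * r := by
    rw [hadef, hbdef, hcdef, Fk_eq_det, Fk_eq_det, Fk_eq_det]; ring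
  have k2 : b * Real.sin α + c * Real.sin β + a * Real.sin γ = 0 := by
    rw [hadef, hbdef, hcdef, Fk_eq_det, Fk_eq_det, Fk_eq_det]; ring
  have hDne : a + b + c ≠ 0 := ne_of_gt hD
  apply mem_convexHull_triple (u := b/(a+b+c)) (v := c/(a+b+c)) (w := a/(a+b+c))
    (by positivity) (by positivity) (by positivity)
    (by rw [← add_div, ← add_div, show b+c+a = a+b+c from by ring, div_self hDne])
  apply combo_coords
  · rw [div_mul_eq_mul_div, div_mul_eq_mul_div, div_mul_eq_mul_div,
      ← add_div, ← add_div, k1, mul_comm, mul_div_assoc, div_self hDne, mul_one]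
  · rw [div_mul_eq_mul_div, div_mul_eq_mul_div, div_mul_eq_mul_div,
      ← add_div, ← add_div, k2, zero_div]

lemma Gout {r : ℝ} (hr : r ∈ Set.Ico (0:ℝ) 1) {a b c : ℝ}
    (h1 : Fk r a b < 0) (h2 : Fk r a c < 0) :
    pt2 r 0 ∉ convexHull ℝ {circlePt a, circlePt b, circlePt c} := by
  intro hmem
  rw [convexHull_insert (Set.insert_nonempty _ _), convexHull_pair,
    mem_convexJoin] at hmem
  obtain ⟨x, hx, z, hz, hyz⟩ := hmem
  rw [Set.mem_singleton_iff] at hx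
  subst hx
  obtain ⟨p, q, hp, hq, hpq, rfl⟩ := hz
  obtain ⟨m, n, hm, hn, hmn, hY⟩ := hyz
  have e1 : m * Real.cos a + n * (p * Real.cos b + q * Real.cos c) = r := by
    have := congrArg (fun v => v 0) hY
    simp only [pt2, circlePt, PiLp.toLp_apply, PiLp.add_apply, PiLp.smul_apply, smul_eq_mul,
      Matrix.cons_val_zero] at this
    linarith [this]
  have e2 : m * Real.sin a + n * (p * Real.sin b + q * Real.sin c) = 0 := by
    have := congrArg (fun v => v 1) hY
    simp only [pt2, circlePt, PiLp.toLp_apply, PiLp.add_apply, PiLp.smul_apply, smul_eq_mul,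
      Matrix.cons_val_one, Matrix.head_cons, Matrix.cons_val_zero] at this
    linarith [this]
  have key : n*p*(Fk r a b) + n*q*(Fk r a c) = 0 := by
    rw [Fk_eq_det, Fk_eq_det]
    linear_combination (Real.cos a - r) * e2 - Real.sin a * e1 +
      (Real.sin a * r * n) * hpq + (Real.sin a * r) * hmn
  have hnp : n * p = 0 := by
    rcases (mul_nonneg hn hp).lt_or_eq with hpos | he
    · exfalso
      nlinarith [mul_nonpos_of_nonneg_of_nonpos (mul_nonneg hn hq) h2.le,
        mul_neg_of_pos_of_neg hpos h1]
    · exact he.symm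
  have hnq : n * q = 0 := by
    rcases (mul_nonneg hn hq).lt_or_eq with hpos | he
    · exfalso
      nlinarith [mul_nonpos_of_nonneg_of_nonpos (mul_nonneg hn hp) h1.le,
        mul_neg_of_pos_of_neg hpos h2]
    · exact he.symm
  have hn0 : n = 0 := by
    have hns : n = n*p + n*q := by rw [← mul_add, hpq, mul_one]
    linarith
  have hm1 : m = 1 := by linarith
  rw [hn0, hm1] at e1 e2
  simp at e1 e2
  nlinarith [Real.sin_sq_add_cos_sq a, hr.1, hr.2]

-- from t7.lean
lemma chi_of_neg {r t s : ℝ} (h : Fk r t s < 0) : chi r t s = 1 := if_pos h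
lemma chi_of_pos {r t s : ℝ} (h : 0 < Fk r t s) : chi r t s = 0 := if_neg (not_lt.2 h.le)

lemma ts1 {α : Type*} (x y z : α) : ({y, x, z} : Set α) = {x, y, z} := Set.insert_comm y x {z}
lemma ts2 {α : Type*} (x y z : α) : ({z, y, x} : Set α) = {x, y, z} := by
  ext w; simp only [Set.mem_insert_iff, Set.mem_singleton_iff]; tauto
lemma ts3 {α : Type*} (x y z : α) : ({x, z, y} : Set α) = {x, y, z} := by
  rw [Set.pair_comm]

lemma IndEq {r : ℝ} (hr : r ∈ Set.Ico (0:ℝ) 1) {α β γ : ℝ}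
    (h1 : Fk r α β ≠ 0) (h2 : Fk r β γ ≠ 0) (h3 : Fk r γ α ≠ 0) :
    (if pt2 r 0 ∈ convexHull ℝ {circlePt α, circlePt β, circlePt γ} then (1:ℝ) else 0)
      = 1 - chi r α β * chi r α γ - chi r β α * chi r β γ - chi r γ β * chi r γ α := by
  have eab : Fk r β α = - Fk r α β := Fk_antisymm r α β
  have ebc : Fk r γ β = - Fk r β γ := Fk_antisymm r β γ
  have eca : Fk r α γ = - Fk r γ α := Fk_antisymm r γ α
  rcases h1.lt_or_gt with ha | ha <;> rcases h2.lt_or_gt with hb | hb <;>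
    rcases h3.lt_or_gt with hc | hc
  -- (−,−,−)
  · rw [if_pos, chi_of_neg ha, chi_of_pos (by rw [eca]; linarith),
      chi_of_pos (by rw [eab]; linarith), chi_of_neg hb,
      chi_of_pos (by rw [ebc]; linarith), chi_of_neg hc]
    · ring
    · have := Gmem (α := α) (β := γ) (γ := β) (by rw [eca]; linarith)
        (by rw [ebc]; linarith) (by rw [eab]; linarith)
      rwa [ts3] at this
  -- (−,−,+)
  · rw [if_neg, chi_of_neg ha, chi_of_neg (by rw [eca]; linarith),
      chi_of_pos (by rw [eab]; linarith), chi_of_neg hb,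
      chi_of_pos (by rw [ebc]; linarith), chi_of_pos hc]
    · ring
    · exact Gout hr ha (by rw [eca]; linarith)
  -- (−,+,−)
  · rw [if_neg, chi_of_neg ha, chi_of_pos (by rw [eca]; linarith),
      chi_of_pos (by rw [eab]; linarith), chi_of_pos hb,
      chi_of_neg (by rw [ebc]; linarith), chi_of_neg hc]
    · ring
    · have := Gout hr (a := γ) (b := β) (c := α) (by rw [ebc]; linarith) hc
      rwa [ts2] at this
  -- (−,+,+)
  · rw [if_neg, chi_of_neg ha, chi_of_neg (by rw [eca]; linarith),
      chi_of_pos (by rw [eab]; linarith), chi_of_pos hb,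
      chi_of_neg (by rw [ebc]; linarith), chi_of_pos hc]
    · ring
    · exact Gout hr ha (by rw [eca]; linarith)
  -- (+,−,−)
  · rw [if_neg, chi_of_pos ha, chi_of_pos (by rw [eca]; linarith),
      chi_of_neg (by rw [eab]; linarith), chi_of_neg hb,
      chi_of_pos (by rw [ebc]; linarith), chi_of_neg hc]
    · ring
    · have := Gout hr (a := β) (b := α) (c := γ) (by rw [eab]; linarith) hb
      rwa [ts1] at this
  -- (+,−,+)
  · rw [if_neg, chi_of_pos ha, chi_of_neg (by rw [eca]; linarith),
      chi_of_neg (by rw [eab]; linarith), chi_of_neg hb,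
      chi_of_pos (by rw [ebc]; linarith), chi_of_pos hc]
    · ring
    · have := Gout hr (a := β) (b := α) (c := γ) (by rw [eab]; linarith) hb
      rwa [ts1] at this
  -- (+,+,−)
  · rw [if_neg, chi_of_pos ha, chi_of_pos (by rw [eca]; linarith),
      chi_of_neg (by rw [eab]; linarith), chi_of_pos hb,
      chi_of_neg (by rw [ebc]; linarith), chi_of_neg hc]
    · ring
    · have := Gout hr (a := γ) (b := β) (c := α) (by rw [ebc]; linarith) hc
      rwa [ts2] at this
  -- (+,+,+)
  · rw [if_pos (Gmem ha hb hc), chi_of_pos ha, chi_of_neg (by rw [eca]; linarith),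
      chi_of_neg (by rw [eab]; linarith), chi_of_pos hb,
      chi_of_neg (by rw [ebc]; linarith), chi_of_pos hc]
    ring

-- from t8.lean
lemma Fk_cont (r : ℝ) : Continuous (fun p : ℝ × ℝ => Fk r p.1 p.2) := by
  unfold Fk
  fun_prop

lemma chi_measurable (r : ℝ) : Measurable (fun p : ℝ × ℝ => chi r p.1 p.2) := by
  have hO : MeasurableSet {p : ℝ × ℝ | Fk r p.1 p.2 < 0} :=
    (isOpen_lt (Fk_cont r) continuous_const).measurableSet
  unfold chi
  exact Measurable.ite hO measurable_const measurable_const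

lemma chi_nonneg (r t s : ℝ) : 0 ≤ chi r t s := by unfold chi; split <;> norm_num
lemma chi_le_one (r t s : ℝ) : chi r t s ≤ 1 := by unfold chi; split <;> norm_num
lemma chi_abs_le (r t s : ℝ) : |chi r t s| ≤ 1 := by
  rw [abs_le]; exact ⟨by linarith [chi_nonneg r t s], chi_le_one r t s⟩

lemma bdd_intervalIntegrable (f : ℝ → ℝ) (hm : Measurable f) (hb : ∀ s, |f s| ≤ 1)
    (a b : ℝ) : IntervalIntegrable f volume a b := by
  rw [intervalIntegrable_iff]
  apply Measure.integrableOn_of_bounded (M := 1) measure_Ioc_lt_top.ne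
    hm.aestronglyMeasurable
  filter_upwards with s using by simpa using hb s

lemma chi_intervalIntegrable (r t a b : ℝ) :
    IntervalIntegrable (fun s => chi r t s) volume a b :=
  bdd_intervalIntegrable _ ((chi_measurable r).comp (measurable_const.prodMk measurable_id))
    (fun s => chi_abs_le r t s) a b

lemma chi_periodicF (r t : ℝ) : Function.Periodic (fun s => Fk r t s) (2*π) := by
  intro s
  show Fk r t (s + 2*π) = Fk r t s
  unfold Fk
  have h1 : s + 2*π - t = (s - t) + 2*π := by ring
  rw [h1, Real.sin_add_two_pi, Real.sin_add_two_pi]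

lemma chi_periodic (r t : ℝ) : Function.Periodic (fun s => chi r t s) (2*π) := by
  intro s
  have : Fk r t (s + 2*π) = Fk r t s := by
    unfold Fk
    have h1 : s + 2*π - t = (s - t) + 2*π := by ring
    rw [h1, Real.sin_add_two_pi, Real.sin_add_two_pi]
  simp only [chi, this]

lemma psi_bounds {r : ℝ} (hr : r ∈ Set.Ico (0:ℝ) 1) (θ : ℝ) :
    -(π/2) < psi r θ ∧ psi r θ < π/2 := abs_lt.1 (abs_psi_lt hr θ)

lemma chi_integral {r : ℝ} (hr : r ∈ Set.Ico (0:ℝ) 1) (t : ℝ) :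
    ∫ s in (0:ℝ)..(2*π), chi r t s = π + 2 * psi r t := by
  have hpi := Real.pi_pos
  obtain ⟨hψ1, hψ2⟩ := psi_bounds hr t
  set m := t + (π - 2 * psi r t) with hm
  have h1 : t < m := by rw [hm]; linarith
  have h2 : m < t + 2*π := by rw [hm]; linarith
  have hshift := (chi_periodic r t).intervalIntegral_add_eq t 0
  rw [zero_add] at hshift
  rw [← hshift]
  rw [← intervalIntegral.integral_add_adjacent_intervals
    (chi_intervalIntegrable r t t m) (chi_intervalIntegrable r t m (t + 2*π))]
  have e1 : ∫ s in t..m, chi r t s = 0 := by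
    rw [intervalIntegral.integral_of_le h1.le, integral_Ioc_eq_integral_Ioo]
    rw [setIntegral_congr_fun measurableSet_Ioo
      (g := fun _ => (0:ℝ)) (fun s hs => ?_), integral_zero]
    unfold chi
    rw [if_neg (not_lt.2 (Fk_pos hr hs.1 hs.2).le)]
  have e2 : ∫ s in m..(t+2*π), chi r t s = π + 2 * psi r t := by
    rw [intervalIntegral.integral_of_le h2.le, integral_Ioc_eq_integral_Ioo]
    rw [setIntegral_congr_fun measurableSet_Ioo
      (g := fun _ => (1:ℝ)) (fun s hs => ?_)]
    · rw [setIntegral_const, Real.volume_real_Ioo_of_le h2.le, smul_eq_mul, mul_one]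
      rw [hm]; ring
    · unfold chi
      rw [if_pos (Fk_neg hr hs.1 hs.2)]
  rw [e1, e2, zero_add]

lemma Fk_zero_countable {r : ℝ} (hr : r ∈ Set.Ico (0:ℝ) 1) (t : ℝ) :
    Set.Countable {s : ℝ | Fk r t s = 0} := by
  have hpi := Real.pi_pos
  obtain ⟨hψ1, hψ2⟩ := psi_bounds hr t
  set m := t + (π - 2 * psi r t) with hm
  apply Set.Countable.mono (s₂ := ⋃ k : ℤ, ({t + k * (2*π), m + k * (2*π)} : Set ℝ))
  · intro s hs
    simp only [Set.mem_setOf_eq] at hs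
    set k : ℤ := ⌊(s - t) / (2*π)⌋ with hk
    have h2π : (0:ℝ) < 2*π := by linarith
    have hfl := Int.floor_le ((s - t) / (2*π))
    have hfu := Int.lt_floor_add_one ((s - t) / (2*π))
    rw [← hk] at hfl hfu
    have hlow : t + (k:ℝ) * (2*π) ≤ s := by
      have := (le_div_iff₀ h2π).1 hfl
      linarith
    have hhigh : s < t + (k:ℝ) * (2*π) + 2*π := by
      have := (div_lt_iff₀ h2π).1 hfu
      push_cast at this
      linarith
    have hFs : Fk r t (s - (k:ℝ) * (2*π)) = 0 := by
      have hp : Fk r t (s - (k:ℝ) * (2*π)) = Fk r t s := by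
        have := (chi_periodicF r t).sub_int_mul_eq (x := s) k
        exact this
      rw [hp, hs]
    rcases eq_or_lt_of_le hlow with heq | hlt
    · refine Set.mem_iUnion.2 ⟨k, Or.inl ?_⟩
      linarith [heq]
    · have h1' : t < s - (k:ℝ)*(2*π) := by linarith
      have h2' : s - (k:ℝ)*(2*π) < t + 2*π := by linarith
      have : s - (k:ℝ)*(2*π) = m := by
        rcases lt_trichotomy (s - (k:ℝ)*(2*π)) m with hc | hc | hc
        · exact absurd hFs (ne_of_gt (Fk_pos hr h1' hc))
        · exact hc
        · exact absurd hFs (ne_of_lt (Fk_neg hr hc h2'))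
      refine Set.mem_iUnion.2 ⟨k, Or.inr ?_⟩
      simp only [Set.mem_singleton_iff]
      linarith
  · exact Set.countable_iUnion (fun k => (Set.finite_singleton _).insert _ |>.countable)

-- from t9.lean
lemma psi_reflect {r : ℝ} (hr : r ∈ Set.Ico (0:ℝ) 1) (θ : ℝ) :
    psi r (2*π - θ) = - psi r θ := by
  have hz : zc r (2*π - θ) = (starRingEnd ℂ) (zc r θ) := by
    unfold zc
    rw [map_sub, map_one, map_mul, Complex.conj_ofReal]
    congr 1
    rw [← Complex.exp_conj]
    have hc : (starRingEnd ℂ) ((θ:ℂ) * Complex.I) = -((θ:ℂ) * Complex.I) := by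
      simp [Complex.conj_ofReal]
    rw [hc]
    have he : (((2*π - θ : ℝ)) : ℂ) * Complex.I = 2*π*Complex.I + -((θ:ℂ)*Complex.I) := by
      push_cast; ring
    rw [he, Complex.exp_add, Complex.exp_two_pi_mul_I, one_mul]
  unfold psi
  rw [hz, Complex.arg_conj]
  have h := abs_psi_lt hr θ
  have hpi := Real.pi_pos
  rw [if_neg]
  unfold psi at h
  rw [abs_lt] at h
  intro hc
  rw [hc] at h
  linarith [h.2]

lemma psi_int_zero {r : ℝ} (hr : r ∈ Set.Ico (0:ℝ) 1) :
    ∫ θ in (0:ℝ)..(2*π), psi r θ = 0 := by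
  have h1 := intervalIntegral.integral_comp_sub_left (a := (0:ℝ)) (b := 2*π)
    (fun θ => psi r θ) (2*π)
  have h2 : (∫ θ in (0:ℝ)..(2*π), psi r (2*π - θ)) = ∫ θ in (0:ℝ)..(2*π), -psi r θ := by
    apply intervalIntegral.integral_congr
    intro θ _
    exact psi_reflect hr θ
  rw [h2] at h1
  rw [intervalIntegral.integral_neg] at h1
  have h3 : (2*π) - (2*π) = (0:ℝ) := by ring
  have h4 : (2*π) - (0:ℝ) = 2*π := by ring
  rw [h3, h4] at h1
  linarith [h1]

-- from t11.lean
lemma chi_meas_comp {X : Type*} [MeasurableSpace X] [TopologicalSpace X]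
    [OpensMeasurableSpace X] (r : ℝ) (g h : X → ℝ) (hg : Continuous g) (hh : Continuous h) :
    Measurable (fun x => chi r (g x) (h x)) := by
  unfold chi
  refine Measurable.ite ?_ measurable_const measurable_const
  have hc : Continuous (fun x => Fk r (g x) (h x)) := by unfold Fk; fun_prop
  exact (isOpen_lt hc continuous_const).measurableSet

lemma int_bdd' {X : Type*} [MeasurableSpace X] (ν : Measure X) [IsFiniteMeasure ν]
    (f : X → ℝ) (M : ℝ) (hm : Measurable f) (hb : ∀ x, |f x| ≤ M) : Integrable f ν := by
  apply Integrable.mono' (integrable_const M) hm.aestronglyMeasurable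
  filter_upwards with s using by simpa using hb s

lemma chi_mul_abs_le (r a b c d : ℝ) : |chi r a b * chi r c d| ≤ 1 := by
  rw [abs_mul]
  calc |chi r a b| * |chi r c d| ≤ 1 * 1 :=
        mul_le_mul (chi_abs_le r a b) (chi_abs_le r c d) (abs_nonneg _) zero_le_one
    _ = 1 := mul_one 1

theorem prob_eq_quarter_sub_arg_sq_integral (r : ℝ) (hr : r ∈ Set.Ico (0:ℝ) 1) :
    (2*π)⁻¹^3 * (∫ α in (0:ℝ)..(2*π), ∫ β in (0:ℝ)..(2*π), ∫ γ in (0:ℝ)..(2*π),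
      if pt2 r 0 ∈ convexHull ℝ {circlePt α, circlePt β, circlePt γ} then (1:ℝ) else 0)
    = 1/4 - 3/(2*π^3) * ∫ θ in (0:ℝ)..(2*π),
        (Complex.arg (1 - (r:ℂ) * Complex.exp (θ * Complex.I)))^2 := by
  have hpi := Real.pi_pos
  have h0T : (0:ℝ) ≤ 2*π := by linarith
  simp only [intervalIntegral.integral_of_le h0T]
  set μ : Measure ℝ := volume.restrict (Set.Ioc (0:ℝ) (2*π)) with hμ
  haveI : IsFiniteMeasure μ := by
    constructor
    rw [hμ, Measure.restrict_apply_univ]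
    exact measure_Ioc_lt_top
  have hμuniv : μ.real Set.univ = 2*π := by
    rw [measureReal_def, hμ, Measure.restrict_apply_univ, Real.volume_Ioc, sub_zero,
      ENNReal.toReal_ofReal h0T]
  -- basic objects
  set ℓ : ℝ → ℝ := fun t => π + 2 * psi r t with hℓ
  have hℓcont : Continuous ℓ := by
    rw [hℓ]; exact continuous_const.add (continuous_const.mul (psi_continuous hr))
  have hℓabs : ∀ t, |ℓ t| ≤ 2*π := by
    intro t
    have h := abs_psi_lt hr t
    rw [hℓ, abs_le]; rw [abs_lt] at h
    constructor <;> simp only <;> linarith [h.1, h.2]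
  -- chi integral in μ form
  have chi_int : ∀ t, ∫ s, chi r t s ∂μ = ℓ t := by
    intro t
    have h := chi_integral hr t
    rwa [intervalIntegral.integral_of_le h0T] at h
  -- psi integral zero in μ form
  have psi_int : ∫ s, psi r s ∂μ = 0 := by
    have h := psi_int_zero hr
    rwa [intervalIntegral.integral_of_le h0T] at h
  -- null sets
  have null_left : ∀ t, ∀ᵐ s ∂μ, Fk r t s ≠ 0 := by
    intro t
    have h0 : volume {s : ℝ | Fk r t s = 0} = 0 :=
      ((Fk_zero_countable hr t)).measure_zero _
    have hc : Continuous (fun s => Fk r t s) := by unfold Fk; fun_prop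
    have hNm : MeasurableSet {s : ℝ | Fk r t s = 0} :=
      (isClosed_singleton.preimage hc).measurableSet
    have h1 : μ {s : ℝ | Fk r t s = 0} = 0 := by
      rw [hμ, Measure.restrict_apply hNm]
      exact measure_mono_null Set.inter_subset_left h0
    rw [ae_iff]
    simpa using h1
  -- product integrability
  have hprodInt : ∀ a : ℝ,
      Integrable (Function.uncurry fun β γ => chi r γ β * chi r γ a) (μ.prod μ) := by
    intro a
    have he : (Function.uncurry fun β γ => chi r γ β * chi r γ a)
        = fun p : ℝ × ℝ => chi r p.2 p.1 * chi r p.2 a := rfl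
    rw [he]
    apply int_bdd' _ _ 1
    · exact (chi_meas_comp r _ _ continuous_snd continuous_fst).mul
        (chi_meas_comp r _ _ continuous_snd continuous_const)
    · intro p; exact chi_mul_abs_le r _ _ _ _
  have hprodInt2 : Integrable (Function.uncurry fun a s => chi r s a * ℓ s) (μ.prod μ) := by
    have he : (Function.uncurry fun a s => chi r s a * ℓ s)
        = fun p : ℝ × ℝ => chi r p.2 p.1 * ℓ p.2 := rfl
    rw [he]
    apply int_bdd' _ _ (2*π)
    · exact (chi_meas_comp r _ _ continuous_snd continuous_fst).mul
        (hℓcont.comp continuous_snd).measurable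
    · intro p
      rw [abs_mul]
      calc |chi r p.2 p.1| * |ℓ p.2| ≤ 1 * (2*π) :=
            mul_le_mul (chi_abs_le r _ _) (hℓabs _) (abs_nonneg _) zero_le_one
        _ = 2*π := one_mul _
  -- level 3
  have lvl3 : ∀ α β, Fk r α β ≠ 0 →
      (∫ γ, (if pt2 r 0 ∈ convexHull ℝ {circlePt α, circlePt β, circlePt γ}
          then (1:ℝ) else 0) ∂μ)
        = 2*π - chi r α β * ℓ α - chi r β α * ℓ β
          - ∫ γ, chi r γ β * chi r γ α ∂μ := by
    intro α β hab
    have hcongr : (fun γ => (if pt2 r 0 ∈ convexHull ℝ {circlePt α, circlePt β, circlePt γ}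
          then (1:ℝ) else 0))
        =ᵐ[μ] fun γ => 1 - chi r α β * chi r α γ - chi r β α * chi r β γ
          - chi r γ β * chi r γ α := by
      filter_upwards [null_left β, null_left α] with γ h1 h2
      exact IndEq hr hab h1 (by rw [Fk_antisymm r α γ]; exact neg_ne_zero.2 h2)
    rw [integral_congr_ae hcongr]
    have i1 : Integrable (fun γ => chi r α β * chi r α γ) μ := by
      apply int_bdd' _ _ 1
      · exact ((chi_meas_comp r _ _ continuous_const continuous_id).const_mul _)
      · intro s; exact chi_mul_abs_le r _ _ _ _
    have i2 : Integrable (fun γ => chi r β α * chi r β γ) μ := by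
      apply int_bdd' _ _ 1
      · exact ((chi_meas_comp r _ _ continuous_const continuous_id).const_mul _)
      · intro s; exact chi_mul_abs_le r _ _ _ _
    have i3 : Integrable (fun γ => chi r γ β * chi r γ α) μ := by
      apply int_bdd' _ _ 1
      · exact (chi_meas_comp r _ _ continuous_id continuous_const).mul
          (chi_meas_comp r _ _ continuous_id continuous_const)
      · intro s; exact chi_mul_abs_le r _ _ _ _
    have e2 : Integrable (fun γ => 1 - chi r α β * chi r α γ) μ :=
      (integrable_const 1).sub i1
    have e3 : Integrable (fun γ => 1 - chi r α β * chi r α γ - chi r β α * chi r β γ) μ :=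
      e2.sub i2
    rw [integral_sub e3 i3, integral_sub e2 i2, integral_sub (integrable_const 1) i1,
      integral_const, integral_const_mul, integral_const_mul, chi_int α, chi_int β,
      hμuniv, smul_eq_mul, mul_one]
  -- level 2
  have lvl2 : ∀ α,
      (∫ β, ∫ γ, (if pt2 r 0 ∈ convexHull ℝ {circlePt α, circlePt β, circlePt γ}
          then (1:ℝ) else 0) ∂μ ∂μ)
        = (2*π)^2 - ℓ α^2 - 2 * ∫ s, chi r s α * ℓ s ∂μ := by
    intro α
    have hcongr : (fun β => ∫ γ, (if pt2 r 0 ∈ convexHull ℝ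
            {circlePt α, circlePt β, circlePt γ} then (1:ℝ) else 0) ∂μ)
        =ᵐ[μ] fun β => 2*π - chi r α β * ℓ α - chi r β α * ℓ β
          - ∫ γ, chi r γ β * chi r γ α ∂μ := by
      filter_upwards [null_left α] with β hβ
      exact lvl3 α β hβ
    rw [integral_congr_ae hcongr]
    have i1 : Integrable (fun β => chi r α β * ℓ α) μ := by
      apply int_bdd' _ _ (2*π)
      · exact (chi_meas_comp r _ _ continuous_const continuous_id).mul_const _
      · intro s
        rw [abs_mul]
        calc |chi r α s| * |ℓ α| ≤ 1 * (2*π) :=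
              mul_le_mul (chi_abs_le r _ _) (hℓabs _) (abs_nonneg _) zero_le_one
          _ = 2*π := one_mul _
    have i2 : Integrable (fun β => chi r β α * ℓ β) μ := by
      apply int_bdd' _ _ (2*π)
      · exact (chi_meas_comp r _ _ continuous_id continuous_const).mul hℓcont.measurable
      · intro s
        rw [abs_mul]
        calc |chi r s α| * |ℓ s| ≤ 1 * (2*π) :=
              mul_le_mul (chi_abs_le r _ _) (hℓabs _) (abs_nonneg _) zero_le_one
          _ = 2*π := one_mul _
    have i3 : Integrable (fun β => ∫ γ, chi r γ β * chi r γ α ∂μ) μ :=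
      (hprodInt α).integral_prod_left
    have e2 : Integrable (fun β => 2*π - chi r α β * ℓ α) μ :=
      (integrable_const (2*π)).sub i1
    have e3 : Integrable (fun β => 2*π - chi r α β * ℓ α - chi r β α * ℓ β) μ :=
      e2.sub i2
    rw [integral_sub e3 i3, integral_sub e2 i2, integral_sub (integrable_const (2*π)) i1,
      integral_const, hμuniv, smul_eq_mul]
    have p1 : ∫ β, chi r α β * ℓ α ∂μ = ℓ α^2 := by
      rw [integral_mul_const, chi_int α, sq]
    have p3 : (∫ β, ∫ γ, chi r γ β * chi r γ α ∂μ ∂μ)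
        = ∫ s, chi r s α * ℓ s ∂μ := by
      rw [show (∫ β, ∫ γ, chi r γ β * chi r γ α ∂μ ∂μ)
          = ∫ γ, ∫ β, chi r γ β * chi r γ α ∂μ ∂μ from integral_integral_swap (hprodInt α)]
      have : ∀ γ, (∫ β, chi r γ β * chi r γ α ∂μ) = chi r γ α * ℓ γ := by
        intro γ
        rw [integral_mul_const, chi_int γ, mul_comm]
      rw [integral_congr_ae (Filter.Eventually.of_forall this)]
    rw [p1, p3]
    ring
  -- level 1
  rw [integral_congr_ae (Filter.Eventually.of_forall lvl2)]
  have j1 : Integrable (fun α => ℓ α^2) μ := by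
    apply int_bdd' _ _ ((2*π)^2)
    · exact (hℓcont.pow 2).measurable
    · intro s
      rw [abs_pow]
      exact pow_le_pow_left₀ (abs_nonneg _) (hℓabs s) 2
  have j2 : Integrable (fun a => ∫ s, chi r s a * ℓ s ∂μ) μ :=
    hprodInt2.integral_prod_left
  have e2 : Integrable (fun a => (2*π)^2 - ℓ a^2) μ := (integrable_const _).sub j1
  rw [integral_sub e2 (j2.const_mul 2), integral_sub (integrable_const _) j1,
    integral_const, hμuniv, smul_eq_mul, integral_const_mul]
  rw [show (∫ a, ∫ s, chi r s a * ℓ s ∂μ ∂μ) = ∫ s, ∫ a, chi r s a * ℓ s ∂μ ∂μ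
    from integral_integral_swap hprodInt2]
  have hin : ∀ s, (∫ a, chi r s a * ℓ s ∂μ) = ℓ s ^ 2 := by
    intro s
    rw [integral_mul_const, chi_int s, sq]
  rw [integral_congr_ae (Filter.Eventually.of_forall hin)]
  -- expand ℓ²
  have ipsi : Integrable (psi r) μ :=
    int_bdd' _ _ (π/2) (psi_continuous hr).measurable (fun s => (abs_psi_lt hr s).le)
  have ipsi2 : Integrable (fun s => psi r s^2) μ := by
    apply int_bdd' _ _ ((π/2)^2) ((psi_continuous hr).pow 2).measurable
    intro s
    rw [Pi.pow_apply, abs_pow]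
    exact pow_le_pow_left₀ (abs_nonneg _) (abs_psi_lt hr s).le 2
  have hL2 : (∫ s, ℓ s^2 ∂μ) = 2*π^3 + 4 * ∫ s, psi r s^2 ∂μ := by
    have hexp : ∀ s, ℓ s^2 = π^2 + 4*π*psi r s + 4*psi r s^2 := by
      intro s
      rw [hℓ]
      ring
    rw [integral_congr_ae (Filter.Eventually.of_forall hexp)]
    have ea : Integrable (fun s => π^2 + 4*π*psi r s) μ :=
      (integrable_const _).add (ipsi.const_mul (4*π))
    rw [integral_add ea (ipsi2.const_mul 4),
      integral_add (integrable_const _) (ipsi.const_mul (4*π)),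
      integral_const, hμuniv, smul_eq_mul, integral_const_mul, integral_const_mul, psi_int]
    ring
  rw [hL2]
  have hQ : (∫ θ, (Complex.arg (1 - (r:ℂ) * Complex.exp ((θ:ℂ) * Complex.I)))^2 ∂μ)
      = ∫ s, psi r s^2 ∂μ := rfl
  rw [hQ]
  have hπ : (π:ℝ) ≠ 0 := ne_of_gt hpi
  field_simp
  ring
end

section
/- For every r ∈ (0, 1), ∫₀^{2π} (sin θ / (1 + r² − 2r cos θ)) · Complex.arg(1 − r·exp(iθ)) dθ = π · log(1 − r²) / r. -/
open Real

open Complex Metric in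
lemma cauchyK (r : ℝ) (h0 : 0 < r) (h1 : r < 1) :
    (∫ θ in (0:ℝ)..(2*π),
        Complex.log (1 - (r:ℂ) * Complex.exp (θ * Complex.I)) / (Complex.exp (θ * Complex.I) - (r:ℂ)))
      = ((2*π*Real.log (1-r^2)/r : ℝ) : ℂ) := by
  set f : ℂ → ℂ := fun z => Complex.log (1 - (r:ℂ)*z) with hf_def
  have hmem : ∀ z ∈ closedBall (0:ℂ) 1, (1 - (r:ℂ)*z) ∈ slitPlane := by
    intro z hz
    rw [mem_closedBall, dist_zero_right] at hz
    rw [Complex.mem_slitPlane_iff]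
    left
    have h2 : z.re ≤ 1 := le_trans (Complex.re_le_norm z) hz
    have h3 : -1 ≤ z.re := by
      have := (Complex.abs_re_le_norm z).trans hz
      linarith [abs_le.mp this]
    simp only [Complex.sub_re, Complex.one_re, Complex.mul_re, Complex.ofReal_re,
      Complex.ofReal_im, Complex.zero_im, zero_mul, sub_zero]
    nlinarith
  have hdiff : DifferentiableOn ℂ f (closedBall (0:ℂ) 1) := by
    intro z hz
    have h1' : DifferentiableAt ℂ (fun z : ℂ => 1 - (r:ℂ)*z) z :=
      (differentiableAt_const _).sub ((differentiableAt_id).const_mul _)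
    exact ((Complex.differentiableAt_log (hmem z hz)).comp z h1').differentiableWithinAt
  have hdc : DiffContOnCl ℂ f (ball (0:ℂ) 1) := hdiff.diffContOnCl_ball (subset_refl _)
  have hrball : (r:ℂ) ∈ ball (0:ℂ) 1 := by
    simp [mem_ball, Complex.dist_eq, Complex.norm_real, abs_of_pos h0, h1]
  have h0ball : (0:ℂ) ∈ ball (0:ℂ) 1 := by simp
  have cauchy1 : (∮ z in C((0:ℂ), 1), (z - (r:ℂ))⁻¹ • f z) = (2 * π * I : ℂ) • f r :=
    hdc.circleIntegral_sub_inv_smul hrball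
  have cauchy0 : (∮ z in C((0:ℂ), 1), (z - (0:ℂ))⁻¹ • f z) = (2 * π * I : ℂ) • f 0 :=
    hdc.circleIntegral_sub_inv_smul h0ball
  have fcont : ContinuousOn f (sphere (0:ℂ) 1) :=
    (ContinuousOn.clog ((continuousOn_const).sub (continuousOn_const.mul continuousOn_id)))
      fun z hz => hmem z (sphere_subset_closedBall hz)
  have hzne : ∀ z ∈ sphere (0:ℂ) 1, z ≠ 0 := by
    intro z hz; rw [mem_sphere_zero_iff_norm] at hz
    intro h; rw [h] at hz; simp at hz
  have hzrne : ∀ z ∈ sphere (0:ℂ) 1, z - (r:ℂ) ≠ 0 := by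
    intro z hz; rw [mem_sphere_zero_iff_norm] at hz
    intro h
    have hzr : z = (r:ℂ) := sub_eq_zero.mp h
    rw [hzr] at hz
    simp [Complex.norm_real] at hz
    rw [abs_of_pos h0] at hz
    linarith
  -- integrability of the two pieces
  have hint1 : CircleIntegrable (fun z => (z - (r:ℂ))⁻¹ • f z) (0:ℂ) 1 :=
    ContinuousOn.circleIntegrable zero_le_one
      (((continuousOn_id.sub continuousOn_const).inv₀ hzrne).smul fcont)
  have hint0 : CircleIntegrable (fun z => (z - (0:ℂ))⁻¹ • f z) (0:ℂ) 1 :=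
    ContinuousOn.circleIntegrable zero_le_one
      (((continuousOn_id.sub continuousOn_const).inv₀ (by simpa using hzne)).smul fcont)
  -- express K as a circle integral
  have key : (∫ θ in (0:ℝ)..(2*π),
        Complex.log (1 - (r:ℂ) * Complex.exp (θ * Complex.I)) / (Complex.exp (θ * Complex.I) - (r:ℂ)))
      = ∮ z in C((0:ℂ), 1), (((r:ℂ)*I)⁻¹ * ((z - (r:ℂ))⁻¹ • f z - (z - (0:ℂ))⁻¹ • f z)) := by
    rw [circleIntegral]
    apply intervalIntegral.integral_congr
    intro θ _
    have hz1 : ‖Complex.exp (θ * Complex.I)‖ = 1 := by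
      simpa using Complex.norm_exp_ofReal_mul_I θ
    have hzs : Complex.exp (θ * Complex.I) ∈ sphere (0:ℂ) 1 := by
      simpa [mem_sphere_zero_iff_norm] using hz1
    have hne0 : Complex.exp (θ * Complex.I) ≠ 0 := Complex.exp_ne_zero _
    have hner : Complex.exp (θ * Complex.I) - (r:ℂ) ≠ 0 := hzrne _ hzs
    have hcm : circleMap 0 1 θ = Complex.exp (θ * Complex.I) := by
      simp [circleMap]
    have hrne : (r:ℂ) ≠ 0 := by exact_mod_cast h0.ne'
    simp only [deriv_circleMap, hcm, smul_eq_mul, sub_zero, circleMap_zero, hf_def]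
    field_simp
    ring
  rw [key]
  rw [circleIntegral.integral_const_mul]
  rw [circleIntegral.integral_sub hint1 hint0]
  rw [cauchy1, cauchy0]
  have hf0 : f 0 = 0 := by simp [hf_def]
  have hfr : f (r:ℂ) = ((Real.log (1 - r^2) : ℝ) : ℂ) := by
    have : (1 : ℂ) - (r:ℂ) * (r:ℂ) = ((1 - r^2 : ℝ) : ℂ) := by
      push_cast; ring
    rw [hf_def]
    simp only [this]
    rw [Complex.ofReal_log (by nlinarith : (0:ℝ) ≤ 1 - r^2)]
  rw [hf0, hfr]
  have hrne : (r:ℂ) ≠ 0 := by exact_mod_cast h0.ne'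
  have hIne : (I:ℂ) ≠ 0 := Complex.I_ne_zero
  push_cast
  field_simp
  ring

section Main
open Complex

theorem integral_sin_mul_arg (r : ℝ) (hr : r ∈ Set.Ioo (0:ℝ) 1) :
    (∫ θ in (0:ℝ)..(2*π), (Real.sin θ / (1 + r^2 - 2*r*Real.cos θ)) *
        Complex.arg (1 - (r:ℂ) * Complex.exp (θ * Complex.I)))
      = π * Real.log (1 - r^2) / r := by
  obtain ⟨h0, h1⟩ := hr
  have cauchyK := cauchyK r h0 h1
  have hrne : r ≠ 0 := h0.ne'
  set e : ℝ → ℂ := fun θ => Complex.exp (θ * Complex.I) with he_def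
  set A : ℝ → ℂ := fun θ => 1 - (r:ℂ) * e θ with hA_def
  set w : ℝ → ℂ := fun θ => Complex.log (A θ) with hw_def
  set w' : ℝ → ℂ := fun θ => (-(r:ℂ) * Complex.I * e θ) / A θ with hw'_def
  have hAre : ∀ θ, (A θ).re = 1 - r * Real.cos θ := by
    intro θ
    simp [hA_def, he_def, Complex.exp_ofReal_mul_I_re, Complex.exp_ofReal_mul_I_im]
  have hAim : ∀ θ, (A θ).im = -(r * Real.sin θ) := by
    intro θ
    simp [hA_def, he_def, Complex.exp_ofReal_mul_I_re, Complex.exp_ofReal_mul_I_im]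
  have hslit : ∀ θ, A θ ∈ Complex.slitPlane := by
    intro θ
    rw [Complex.mem_slitPlane_iff]
    left
    rw [hAre]
    nlinarith [Real.cos_le_one θ, Real.neg_one_le_cos θ]
  have hAne : ∀ θ, A θ ≠ 0 := fun θ => Complex.slitPlane_ne_zero (hslit θ)
  have hD : ∀ θ, Complex.normSq (A θ) = 1 + r^2 - 2*r*Real.cos θ := by
    intro θ
    rw [Complex.normSq_apply, hAre θ, hAim θ]
    nlinarith [Real.sin_sq_add_cos_sq θ]
  have hDpos : ∀ θ, 0 < 1 + r^2 - 2*r*Real.cos θ := by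
    intro θ
    nlinarith [Real.cos_le_one θ, sq_nonneg (1 - r)]
  have hecont : Continuous e := by
    exact (Complex.continuous_ofReal.mul continuous_const).cexp
  have hAcont : Continuous A := continuous_const.sub (continuous_const.mul hecont)
  have hwcont : Continuous w := hAcont.clog fun θ => hslit θ
  have hw'cont : Continuous w' :=
    ((continuous_const.mul hecont)).div hAcont hAne
  have hederiv : ∀ θ, HasDerivAt e (Complex.I * e θ) θ := by
    intro θ
    have h1 : HasDerivAt (fun t : ℝ => (t:ℂ) * Complex.I) Complex.I θ := by
      simpa using (Complex.ofRealCLM.hasDerivAt (x := θ)).mul_const Complex.I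
    simpa [he_def, mul_comm] using h1.cexp
  have hAderiv : ∀ θ, HasDerivAt A (-(r:ℂ) * Complex.I * e θ) θ := by
    intro θ
    have := ((hederiv θ).const_mul (r:ℂ)).const_sub 1
    exact this.congr_deriv (by ring)
  have hwderiv : ∀ θ, HasDerivAt w (w' θ) θ := fun θ => ((hAderiv θ).clog_real (hslit θ))
  have hGderiv : ∀ θ, HasDerivAt (fun t => (w t * w t).im) ((2 * w θ * w' θ)).im θ := by
    intro θ
    have h2 := (hwderiv θ).mul (hwderiv θ)
    have h3 : w' θ * w θ + w θ * w' θ = 2 * w θ * w' θ := by ring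
    rw [h3] at h2
    exact (Complex.imCLM.hasFDerivAt.comp_hasDerivAt θ h2)
  have hg1cont : Continuous (fun θ => (2 * w θ * w' θ).im) :=
    Complex.continuous_im.comp ((continuous_const.mul hwcont).mul hw'cont)
  have hgint : (∫ θ in (0:ℝ)..(2*π), (2 * w θ * w' θ).im) = 0 := by
    rw [intervalIntegral.integral_eq_sub_of_hasDerivAt (fun θ _ => hGderiv θ)
      (hg1cont.intervalIntegrable _ _)]
    have he2 : e (2*π) = e 0 := by
      simp only [he_def]
      rw [show ((2*π:ℝ):ℂ) * Complex.I = 2*↑π*Complex.I by push_cast; ring,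
        Complex.exp_two_pi_mul_I]
      simp
    have hA2 : A (2*π) = A 0 := by simp only [hA_def, he2]
    simp [hw_def, hA2]
  -- the key pointwise identity
  have heRne : ∀ θ, e θ - (r:ℂ) ≠ 0 := by
    intro θ h
    have hzr : e θ = (r:ℂ) := sub_eq_zero.mp h
    have : ‖e θ‖ = 1 := Complex.norm_exp_ofReal_mul_I θ
    rw [hzr] at this
    rw [Complex.norm_real, Real.norm_eq_abs, abs_of_pos h0] at this
    linarith
  have hkey : ∀ θ, (Real.sin θ / (1 + r^2 - 2*r*Real.cos θ)) *
        Complex.arg (1 - (r:ℂ) * Complex.exp (θ * Complex.I))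
      = (1/(4*r)) * (2 * w θ * w' θ).im
        + (1/(2*r)) * (((starRingEnd ℂ) (w' θ)) * w θ).im := by
    intro θ
    have harg : Complex.arg (1 - (r:ℂ) * Complex.exp (θ*Complex.I)) = (w θ).im :=
      (Complex.log_im _).symm
    have hre : (w' θ).re = r * Real.sin θ / (1 + r^2 - 2*r*Real.cos θ) := by
      have h1 : (-(r:ℂ) * Complex.I * e θ).re = r * Real.sin θ := by
        simp [he_def, Complex.mul_re, Complex.mul_im,
          Complex.exp_ofReal_mul_I_re, Complex.exp_ofReal_mul_I_im]
      have h2 : (-(r:ℂ) * Complex.I * e θ).im = -(r * Real.cos θ) := by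
        simp [he_def, Complex.mul_re, Complex.mul_im,
          Complex.exp_ofReal_mul_I_re, Complex.exp_ofReal_mul_I_im]
      rw [hw'_def]
      simp only
      rw [Complex.div_re, hD θ, h1, h2, hAre θ, hAim θ]
      field_simp
      ring
    have hrhs : (1/(4*r)) * (2 * w θ * w' θ).im
        + (1/(2*r)) * (((starRingEnd ℂ) (w' θ)) * w θ).im
        = (w' θ).re * (w θ).im / r := by
      simp only [Complex.mul_im, Complex.mul_re, Complex.conj_re, Complex.conj_im,
        Complex.re_ofNat, Complex.im_ofNat]
      field_simp
      ring
    rw [harg, hrhs, hre]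
    have hDne : (1 + r^2 - 2*r*Real.cos θ) ≠ 0 := (hDpos θ).ne'
    field_simp
  rw [intervalIntegral.integral_congr (fun θ _ => hkey θ)]
  have hg2cont : Continuous (fun θ => (((starRingEnd ℂ) (w' θ)) * w θ).im) :=
    Complex.continuous_im.comp ((Complex.continuous_conj.comp hw'cont).mul hwcont)
  rw [intervalIntegral.integral_add
    ((hg1cont.intervalIntegrable _ _).const_mul _)
    ((hg2cont.intervalIntegrable _ _).const_mul _),
    intervalIntegral.integral_const_mul, intervalIntegral.integral_const_mul, hgint]
  -- now compute the second integral
  have hconj : ∀ θ, ((starRingEnd ℂ) (w' θ)) * w θ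
      = (r:ℂ) * Complex.I * (w θ / (e θ - (r:ℂ))) := by
    intro θ
    have hene : e θ ≠ 0 := Complex.exp_ne_zero _
    have hee : (starRingEnd ℂ) (e θ) = (e θ)⁻¹ := by
      rw [he_def]
      simp only
      rw [← Complex.exp_conj]
      rw [map_mul, Complex.conj_ofReal, Complex.conj_I]
      rw [show (θ:ℂ) * (-Complex.I) = -(θ*Complex.I) by ring, Complex.exp_neg]
    have hAconj_ne : (starRingEnd ℂ) (A θ) ≠ 0 := by
      simpa using hAne θ
    have h9 : (1:ℂ) - (r:ℂ) * (e θ)⁻¹ ≠ 0 := by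
      have h9' : (starRingEnd ℂ) (A θ) ≠ 0 := by
        simpa using hAne θ
      have h9'' : (starRingEnd ℂ) (A θ) = 1 - (r:ℂ) * (e θ)⁻¹ := by
        rw [hA_def]
        simp only [map_sub, map_one, map_mul, Complex.conj_ofReal, hee]
      rwa [h9''] at h9'
    rw [hw'_def]
    simp only [map_div₀, map_mul, map_neg, Complex.conj_ofReal, Complex.conj_I, hee, hA_def,
      map_sub, map_one]
    field_simp
  have him : ∀ θ, (((starRingEnd ℂ) (w' θ)) * w θ).im
      = r * (w θ / (e θ - (r:ℂ))).re := by
    intro θ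
    rw [hconj θ]
    simp [Complex.mul_im, Complex.mul_re]
  have hFint : IntervalIntegrable (fun θ => w θ / (e θ - (r:ℂ))) MeasureTheory.volume 0 (2*π) :=
    (hwcont.div (hecont.sub continuous_const) heRne).intervalIntegrable _ _
  have h2nd : (∫ θ in (0:ℝ)..(2*π), (((starRingEnd ℂ) (w' θ)) * w θ).im)
      = r * (2*π*Real.log (1-r^2)/r) := by
    rw [intervalIntegral.integral_congr (fun θ _ => him θ)]
    rw [intervalIntegral.integral_const_mul]
    have hre : (∫ θ in (0:ℝ)..(2*π), (w θ / (e θ - (r:ℂ))).re)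
        = (∫ θ in (0:ℝ)..(2*π), w θ / (e θ - (r:ℂ))).re := by
      have := Complex.reCLM.intervalIntegral_comp_comm hFint
      simpa using this
    rw [hre]
    have : (∫ θ in (0:ℝ)..(2*π), w θ / (e θ - (r:ℂ))) = ((2*π*Real.log (1-r^2)/r : ℝ) : ℂ) :=
      cauchyK
    rw [this, Complex.ofReal_re]
  rw [h2nd]
  field_simp
  ring

end Main
end

section
/- For every r ∈ (0, 1), the circle integral over the unit circle ∮_{|z|=1} ((z² − 1)/((1 − r·z)·(z − r)·z)) · Complex.log(1 − r·z) dz = −2πi · Real.log(1 − r²) / r. (By the residue theorem: the residue at z = 0 vanishes since log 1 = 0, and the residue at z = r equals −log(1 − r²)/r.) -/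
open Real

set_option maxHeartbeats 1000000 in
theorem circleIntegral_log_eq (r : ℝ) (hr : r ∈ Set.Ioo (0:ℝ) 1) :
    (∮ z in C(0, 1), ((z^2 - 1)/((1 - (r:ℂ)*z)*(z - (r:ℂ))*z)) * Complex.log (1 - (r:ℂ)*z))
      = -2*π*Complex.I * Real.log (1 - r^2) / r := by
  obtain ⟨hr0, hr1⟩ := hr
  set L : ℂ → ℂ := fun z => Complex.log (1 - (r:ℂ)*z) with hL
  have hne : ∀ z : ℂ, z ∈ Metric.closedBall (0:ℂ) 1 → 0 < (1 - (r:ℂ)*z).re := by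
    intro z hz
    simp only [Metric.mem_closedBall, dist_zero_right] at hz
    have h1 : |z.re| ≤ ‖z‖ := Complex.abs_re_le_norm z
    have : r * z.re < 1 := by nlinarith [abs_le.mp h1 |>.2, abs_le.mp h1 |>.1]
    simp only [Complex.sub_re, Complex.one_re, Complex.mul_re, Complex.ofReal_re,
      Complex.ofReal_im, zero_mul, sub_zero]
    linarith
  have hne0 : ∀ z : ℂ, z ∈ Metric.closedBall (0:ℂ) 1 → (1 - (r:ℂ)*z) ≠ 0 := by
    intro z hz h
    have := hne z hz
    rw [h] at this; simp at this
  have hdiff : ∀ z ∈ Metric.closedBall (0:ℂ) 1, DifferentiableAt ℂ L z := by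
    intro z hz
    apply DifferentiableAt.comp (g := Complex.log) (f := fun z => 1 - (r:ℂ)*z)
    · exact Complex.differentiableAt_log (Or.inl (hne z hz))
    · fun_prop
  have hLd : DiffContOnCl ℂ L (Metric.ball (0:ℂ) 1) := by
    apply DifferentiableOn.diffContOnCl
    intro z hz
    exact (hdiff z (Metric.closure_ball_subset_closedBall hz)).differentiableWithinAt
  have hr0' : (0:ℂ) ∈ Metric.ball (0:ℂ) 1 := by simp
  have hrmem : (r:ℂ) ∈ Metric.ball (0:ℂ) 1 := by
    simp [Complex.norm_real, abs_of_pos hr0, hr1]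
  -- piece 1 : integral of z⁻¹ • L z
  have h1 : (∮ z in C(0, 1), (z - 0)⁻¹ • L z) = (2 * π * Complex.I : ℂ) • L 0 :=
    hLd.circleIntegral_sub_inv_smul hr0'
  have h2 : (∮ z in C(0, 1), (z - (r:ℂ))⁻¹ • L z) = (2 * π * Complex.I : ℂ) • L (r:ℂ) :=
    hLd.circleIntegral_sub_inv_smul hrmem
  -- piece 3 : integral of (1-rz)⁻¹ * L z = 0
  have hcont3 : ContinuousOn (fun z => (1 - (r:ℂ)*z)⁻¹ * L z) (Metric.closedBall (0:ℂ) 1) := by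
    apply ContinuousOn.mul
    · exact ContinuousOn.inv₀ (by fun_prop) hne0
    · intro z hz
      exact (hdiff z hz).continuousAt.continuousWithinAt
  have h3 : (∮ z in C(0, 1), (1 - (r:ℂ)*z)⁻¹ * L z) = 0 := by
    apply Complex.circleIntegral_eq_zero_of_differentiable_on_off_countable zero_le_one
      Set.countable_empty hcont3
    intro z hz
    have hz' : z ∈ Metric.closedBall (0:ℂ) 1 := Metric.ball_subset_closedBall hz.1
    exact ((by fun_prop : DifferentiableAt ℂ (fun z : ℂ => 1 - (r:ℂ)*z) z).inv
      (hne0 z hz')).mul (hdiff z hz')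
  -- integrability of pieces
  have hsub : Metric.sphere (0:ℂ) 1 ⊆ Metric.closedBall (0:ℂ) 1 :=
    Metric.sphere_subset_closedBall
  have hLc : ContinuousOn L (Metric.sphere (0:ℂ) 1) := fun z hz =>
    (hdiff z (hsub hz)).continuousAt.continuousWithinAt
  have hc1 : ContinuousOn (fun z : ℂ => (z - 0)⁻¹ • L z) (Metric.sphere (0:ℂ) 1) := by
    apply ContinuousOn.fun_smul _ hLc
    apply ContinuousOn.inv₀ (by fun_prop)
    intro z hz
    simp only [Metric.mem_sphere, dist_zero_right] at hz
    simp only [sub_zero]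
    intro h; rw [h] at hz; simp at hz
  have hc2 : ContinuousOn (fun z : ℂ => (z - (r:ℂ))⁻¹ • L z) (Metric.sphere (0:ℂ) 1) := by
    apply ContinuousOn.fun_smul _ hLc
    apply ContinuousOn.inv₀ (by fun_prop)
    intro z hz
    simp only [Metric.mem_sphere, dist_zero_right] at hz
    intro h
    rw [sub_eq_zero] at h
    rw [h] at hz
    simp [Complex.norm_real, abs_of_pos hr0] at hz
    linarith
  have hi1 : CircleIntegrable (fun z : ℂ => (z - 0)⁻¹ • L z) 0 1 :=
    hc1.circleIntegrable zero_le_one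
  have hi2 : CircleIntegrable (fun z : ℂ => (z - (r:ℂ))⁻¹ • L z) 0 1 :=
    hc2.circleIntegrable zero_le_one
  have hi1' : CircleIntegrable (fun z : ℂ => (r:ℂ)⁻¹ • ((z - 0)⁻¹ • L z)) 0 1 :=
    (hc1.fun_const_smul _).circleIntegrable zero_le_one
  have hi2' : CircleIntegrable (fun z : ℂ => (r:ℂ)⁻¹ • ((z - (r:ℂ))⁻¹ • L z)) 0 1 :=
    (hc2.fun_const_smul _).circleIntegrable zero_le_one
  have hi23 : CircleIntegrable
      (fun z : ℂ => (r:ℂ)⁻¹ • ((z - (r:ℂ))⁻¹ • L z) - (1 - (r:ℂ)*z)⁻¹ * L z) 0 1 :=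
    ((hc2.fun_const_smul _).sub (hcont3.mono hsub)).circleIntegrable zero_le_one
  have hi3 : CircleIntegrable (fun z => (1 - (r:ℂ)*z)⁻¹ * L z) 0 1 :=
    ContinuousOn.circleIntegrable zero_le_one (hcont3.mono hsub)
  -- pointwise decomposition on the sphere
  have hkey : Set.EqOn
      (fun z : ℂ => ((z^2 - 1)/((1 - (r:ℂ)*z)*(z - (r:ℂ))*z)) * L z)
      (fun z : ℂ => (r:ℂ)⁻¹ • ((z - 0)⁻¹ • L z) -
        ((r:ℂ)⁻¹ • ((z - (r:ℂ))⁻¹ • L z) - (1 - (r:ℂ)*z)⁻¹ * L z))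
      (Metric.sphere (0:ℂ) 1) := by
    intro z hz
    have hz' : z ∈ Metric.closedBall (0:ℂ) 1 := hsub hz
    simp only [Metric.mem_sphere, dist_zero_right] at hz
    have hz0 : z ≠ 0 := by intro h; rw [h] at hz; simp at hz
    have hzr : z - (r:ℂ) ≠ 0 := by
      intro h; rw [sub_eq_zero] at h; rw [h] at hz
      simp [Complex.norm_real, abs_of_pos hr0] at hz; linarith
    have hrz : (1 - (r:ℂ)*z) ≠ 0 := hne0 z hz'
    have hrC : (r:ℂ) ≠ 0 := by exact_mod_cast hr0.ne'
    simp only [smul_eq_mul, sub_zero]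
    have hrz' : (1 - z*(r:ℂ)) ≠ 0 := by rw [mul_comm]; exact hrz
    field_simp
    ring
  rw [circleIntegral.integral_congr zero_le_one hkey,
    circleIntegral.integral_sub hi1' hi23,
    circleIntegral.integral_sub hi2' hi3,
    circleIntegral.integral_smul, circleIntegral.integral_smul, h1, h2, h3]
  have hL0 : L 0 = 0 := by simp [hL]
  have hLr : L (r:ℂ) = (Real.log (1 - r^2) : ℂ) := by
    have h1r : (0:ℝ) ≤ 1 - r^2 := by nlinarith
    show Complex.log (1 - (r:ℂ)*(r:ℂ)) = _
    rw [show (1 : ℂ) - (r:ℂ) * (r:ℂ) = ((1 - r^2 : ℝ) : ℂ) by push_cast; ring,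
      ← Complex.ofReal_log h1r]
  rw [hL0, hLr]
  have hrC : (r:ℂ) ≠ 0 := by exact_mod_cast hr0.ne'
  simp only [smul_eq_mul]
  field_simp
  ring
end

section
/- For every r ∈ [0, 1), ∫₀^{2π} (Complex.arg(1 − r·exp(iθ)))² dθ = π · ∑_{n=1}^∞ r^(2n)/n² (that is, the integral equals π · Li₂(r²)). -/
set_option maxHeartbeats 1000000


open Real

open MeasureTheory intervalIntegral in
private lemma aux_int_cos (k : ℤ) (hk : k ≠ 0) :
    (∫ θ in (0:ℝ)..(2*π), Real.cos (k * θ)) = 0 := by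
  have hk' : (k:ℝ) ≠ 0 := Int.cast_ne_zero.mpr hk
  rw [intervalIntegral.integral_comp_mul_left (fun x => Real.cos x) hk']
  simp only [mul_zero, integral_cos, Real.sin_zero, sub_zero, smul_eq_mul]
  rw [show (k:ℝ) * (2*π) = ((2*k : ℤ) : ℝ) * π by push_cast; ring, Real.sin_int_mul_pi,
    mul_zero]

open intervalIntegral in
private lemma aux_sin_orth (n m : ℕ) :
    (∫ θ in (0:ℝ)..(2*π), Real.sin (((n:ℝ)+1)*θ) * Real.sin (((m:ℝ)+1)*θ))
      = if n = m then π else 0 := by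
  have hptr : ∀ θ:ℝ, Real.sin (((n:ℝ)+1)*θ) * Real.sin (((m:ℝ)+1)*θ)
      = (Real.cos ((((n:ℤ) - m : ℤ):ℝ)*θ) - Real.cos ((((n:ℤ)+m+2 : ℤ):ℝ)*θ))/2 := by
    intro θ
    have h1 : ((((n:ℤ) - m : ℤ)):ℝ)*θ = ((n:ℝ)+1)*θ - ((m:ℝ)+1)*θ := by push_cast; ring
    have h2 : ((((n:ℤ)+m+2 : ℤ)):ℝ)*θ = ((n:ℝ)+1)*θ + ((m:ℝ)+1)*θ := by push_cast; ring
    rw [h1, h2, Real.cos_sub, Real.cos_add]; ring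
  rw [intervalIntegral.integral_congr (fun θ _ => hptr θ)]
  have hc : ∀ k : ℤ, IntervalIntegrable (fun θ : ℝ => Real.cos ((k:ℝ) * θ))
      MeasureTheory.volume 0 (2*π) :=
    fun k => (Real.continuous_cos.comp (continuous_const.mul continuous_id)).intervalIntegrable _ _
  rw [intervalIntegral.integral_div, intervalIntegral.integral_sub (hc _) (hc _)]
  rcases eq_or_ne n m with h | h
  · subst h
    have e1 : (∫ θ in (0:ℝ)..(2*π), Real.cos ((((n:ℤ) - n : ℤ):ℝ)*θ)) = 2*π := by
      simp
    rw [e1, aux_int_cos ((n:ℤ)+n+2) (by omega)]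
    simp [mul_div_assoc]
  · rw [aux_int_cos ((n:ℤ) - m) (sub_ne_zero.mpr (by exact_mod_cast h)),
      aux_int_cos ((n:ℤ)+m+2) (by omega)]
    simp [h]

private lemma aux_hasSum_arg (r : ℝ) (hr0 : 0 ≤ r) (hr1 : r < 1) (θ : ℝ) :
    HasSum (fun n : ℕ => -(r^(n+1) * Real.sin (((n:ℝ)+1)*θ) / ((n:ℝ)+1)))
      (Complex.arg (1 - (r:ℂ) * Complex.exp (θ * Complex.I))) := by
  set z : ℂ := (r:ℂ) * Complex.exp (θ * Complex.I) with hz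
  have hznorm : ‖z‖ < 1 := by
    rw [hz]
    simp only [norm_mul, Complex.norm_real, Real.norm_eq_abs, abs_of_nonneg hr0]
    rw [Complex.norm_exp_ofReal_mul_I]
    simpa using hr1
  have H := Complex.hasSum_taylorSeries_neg_log hznorm
  have H1 : HasSum (fun n : ℕ => z^(n+1)/((n:ℂ)+1)) (-Complex.log (1 - z)) := by
    have := (hasSum_nat_add_iff (f := fun n : ℕ => z^n/(n:ℂ)) 1).mpr (by simpa using H)
    simpa [pow_succ] using this
  have key : ∀ n:ℕ, (z^(n+1)/((n:ℂ)+1)).im = r^(n+1) * Real.sin (((n:ℝ)+1)*θ) / ((n:ℝ)+1) := by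
    intro n
    have e1 : z^(n+1) = ((r^(n+1) : ℝ) : ℂ) * Complex.exp ((((n:ℝ)+1)*θ : ℝ) * Complex.I) := by
      rw [hz, mul_pow, ← Complex.exp_nat_mul]
      push_cast
      ring_nf
    rw [e1, show ((n:ℂ)+1) = (((n:ℝ)+1 : ℝ) : ℂ) by push_cast; ring]
    rw [Complex.div_ofReal_im, Complex.mul_im, Complex.ofReal_im, Complex.ofReal_re,
      Complex.exp_ofReal_mul_I_im]
    ring
  have H2 : HasSum (fun n : ℕ => r^(n+1) * Real.sin (((n:ℝ)+1)*θ) / ((n:ℝ)+1))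
      (-(Complex.arg (1 - z))) := by
    have := Complex.imCLM.hasSum H1
    simpa [key, Complex.log_im] using this
  simpa using H2.neg

open MeasureTheory intervalIntegral

theorem integral_arg_sq_eq_pi_mul_dilog (r : ℝ) (hr : r ∈ Set.Ico (0:ℝ) 1) :
    (∫ θ in (0:ℝ)..(2*π), (Complex.arg (1 - (r:ℂ) * Complex.exp (θ * Complex.I)))^2)
      = π * ∑' n : ℕ, r ^ (2*(n+1)) / ((n:ℝ)+1)^2 := by
  obtain ⟨hr0, hr1⟩ := hr
  set f : ℕ → ℝ → ℝ := fun n θ => -(r^(n+1) * Real.sin (((n:ℝ)+1)*θ) / ((n:ℝ)+1)) with hf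
  have hA : ∀ θ, HasSum (fun n => f n θ)
      (Complex.arg (1 - (r:ℂ) * Complex.exp (θ * Complex.I))) :=
    fun θ => aux_hasSum_arg r hr0 hr1 θ
  have hbound : ∀ n θ, |f n θ| ≤ r^(n+1) := by
    intro n θ
    have h1 : |f n θ| = r^(n+1) * |Real.sin (((n:ℝ)+1)*θ)| / ((n:ℝ)+1) := by
      rw [hf]
      simp only [abs_neg, abs_div, abs_mul, abs_pow, abs_of_nonneg hr0]
      rw [abs_of_nonneg (by positivity : (0:ℝ) ≤ (n:ℝ)+1)]
    rw [h1]
    calc r^(n+1) * |Real.sin (((n:ℝ)+1)*θ)| / ((n:ℝ)+1)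
        ≤ r^(n+1) * |Real.sin (((n:ℝ)+1)*θ)| :=
          div_le_self (by positivity) (by linarith [Nat.cast_nonneg (α := ℝ) n])
      _ ≤ r^(n+1) * 1 := mul_le_mul_of_nonneg_left (Real.abs_sin_le_one _) (by positivity)
      _ = r^(n+1) := mul_one _
  have hsum1 : Summable (fun n : ℕ => r^(n+1)) := by
    have := (summable_geometric_of_lt_one hr0 hr1).mul_left r
    simpa [pow_succ, mul_comm] using this
  have hsumf : ∀ θ, Summable (fun n => ‖f n θ‖) := fun θ =>
    hsum1.of_nonneg_of_le (fun n => norm_nonneg _)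
      (fun n => by simpa [Real.norm_eq_abs] using hbound n θ)
  have hprod : ∀ θ, HasSum (fun p : ℕ×ℕ => f p.1 θ * f p.2 θ)
      ((Complex.arg (1 - (r:ℂ) * Complex.exp (θ * Complex.I)))^2) := by
    intro θ
    have := (hA θ).mul (hA θ) (summable_mul_of_summable_norm (hsumf θ) (hsumf θ))
    simpa [sq] using this
  have hcont : ∀ n : ℕ, Continuous (f n) := by
    intro n
    rw [hf]
    exact ((continuous_const.mul (Real.continuous_sin.comp
      (continuous_const.mul continuous_id))).div_const _).neg
  have hInt : ∀ p : ℕ×ℕ, Integrable (fun θ => f p.1 θ * f p.2 θ)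
      (volume.restrict (Set.Ioc (0:ℝ) (2*π))) :=
    fun p => ((hcont p.1).mul (hcont p.2)).integrableOn_Ioc
  have hpi : (0:ℝ) ≤ 2*π := by positivity
  have hbound2 : ∀ p : ℕ×ℕ, (∫ θ in Set.Ioc (0:ℝ) (2*π), ‖f p.1 θ * f p.2 θ‖)
      ≤ (2*π) * (r^(p.1+1) * r^(p.2+1)) := by
    intro p
    have hle : ∀ θ ∈ Set.Ioc (0:ℝ) (2*π), ‖f p.1 θ * f p.2 θ‖ ≤ r^(p.1+1) * r^(p.2+1) := by
      intro θ _
      rw [norm_mul]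
      exact mul_le_mul (by simpa using hbound p.1 θ) (by simpa using hbound p.2 θ)
        (norm_nonneg _) (by positivity)
    calc (∫ θ in Set.Ioc (0:ℝ) (2*π), ‖f p.1 θ * f p.2 θ‖)
        ≤ ∫ _ in Set.Ioc (0:ℝ) (2*π), r^(p.1+1) * r^(p.2+1) :=
          setIntegral_mono_on (hInt p).norm ((integrableOn_const_iff).mpr (Or.inr (by
            simp [Real.volume_Ioc]; exact ENNReal.mul_lt_top (by norm_num) ENNReal.ofReal_lt_top))) measurableSet_Ioc hle
      _ = (2*π) * (r^(p.1+1) * r^(p.2+1)) := by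
          rw [setIntegral_const]
          simp [Real.volume_Ioc, ENNReal.toReal_ofReal hpi, Real.pi_pos.le]
  have hsumprod : Summable (fun p : ℕ×ℕ => (2*π) * (r^(p.1+1) * r^(p.2+1))) :=
    (hsum1.mul_of_nonneg hsum1 (fun n => by positivity) (fun n => by positivity)).mul_left (2*π)
  have hSum : Summable (fun p : ℕ×ℕ => ∫ θ in Set.Ioc (0:ℝ) (2*π), ‖f p.1 θ * f p.2 θ‖) :=
    hsumprod.of_nonneg_of_le
      (fun p => integral_nonneg (fun θ => norm_nonneg _)) hbound2
  -- compute each integral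
  have hval : ∀ p : ℕ×ℕ, (∫ θ in Set.Ioc (0:ℝ) (2*π), f p.1 θ * f p.2 θ)
      = if p.1 = p.2 then π * (r ^ (2*(p.1+1)) / ((p.1:ℝ)+1)^2) else 0 := by
    intro p
    rw [← intervalIntegral.integral_of_le hpi]
    have hrw : ∀ θ : ℝ, f p.1 θ * f p.2 θ
        = (r^(p.1+1)/((p.1:ℝ)+1)) * (r^(p.2+1)/((p.2:ℝ)+1))
          * (Real.sin (((p.1:ℝ)+1)*θ) * Real.sin (((p.2:ℝ)+1)*θ)) := by
      intro θ; rw [hf]; ring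
    rw [intervalIntegral.integral_congr (fun θ _ => hrw θ),
      intervalIntegral.integral_const_mul, aux_sin_orth]
    rcases eq_or_ne p.1 p.2 with h | h
    · rw [if_pos h, if_pos h, ← h]
      rw [show 2*(p.1+1) = (p.1+1) + (p.1+1) by ring, pow_add]
      have hne : ((p.1:ℝ)+1) ≠ 0 := by positivity
      field_simp
      ring
    · simp [h]
  have key : (∫ θ in (0:ℝ)..(2*π),
      (Complex.arg (1 - (r:ℂ) * Complex.exp (θ * Complex.I)))^2)
      = ∑' p : ℕ×ℕ, ∫ θ in Set.Ioc (0:ℝ) (2*π), f p.1 θ * f p.2 θ := by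
    rw [intervalIntegral.integral_congr (fun θ _ => ((hprod θ).tsum_eq).symm),
      intervalIntegral.integral_of_le hpi,
      ← MeasureTheory.integral_tsum_of_summable_integral_norm hInt hSum]
  rw [key]
  -- evaluate the double sum
  have hdiagsum : Summable (fun p : ℕ×ℕ =>
      if p.1 = p.2 then π * (r ^ (2*(p.1+1)) / ((p.1:ℝ)+1)^2) else 0) := by
    refine hsumprod.of_nonneg_of_le (fun p => by positivity) (fun p => ?_)
    rcases eq_or_ne p.1 p.2 with h | h
    · rw [if_pos h, ← h]
      rw [show 2*(p.1+1) = (p.1+1) + (p.1+1) by ring, pow_add]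
      have h1 : r ^ (p.1+1) * r ^ (p.1+1) / ((p.1:ℝ)+1)^2 ≤ r ^ (p.1+1) * r ^ (p.1+1) / 1 :=
        div_le_div_of_nonneg_left (by positivity) one_pos
          (by nlinarith [Nat.cast_nonneg (α := ℝ) p.1])
      have h2 : π ≤ 2*π := by nlinarith [Real.pi_pos]
      calc π * (r ^ (p.1+1) * r ^ (p.1+1) / ((p.1:ℝ)+1)^2)
          ≤ (2*π) * (r ^ (p.1+1) * r ^ (p.1+1) / 1) := by
            apply mul_le_mul h2 h1 (by positivity) (by positivity)
        _ = (2*π) * (r ^ (p.1+1) * r ^ (p.1+1)) := by ring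
      -- fix indices
    · rw [if_neg h]; positivity
  calc (∑' p : ℕ×ℕ, ∫ θ in Set.Ioc (0:ℝ) (2*π), f p.1 θ * f p.2 θ)
      = ∑' p : ℕ×ℕ, (if p.1 = p.2 then π * (r ^ (2*(p.1+1)) / ((p.1:ℝ)+1)^2) else 0) :=
        tsum_congr hval
    _ = ∑' n : ℕ, ∑' m : ℕ, (if n = m then π * (r ^ (2*(n+1)) / ((n:ℝ)+1)^2) else 0) := by
        refine Summable.tsum_prod' hdiagsum (fun n => ?_)
        refine summable_of_ne_finset_zero (s := {n}) (fun m hm => ?_)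
        simp only [Finset.mem_singleton] at hm
        exact if_neg (fun h => hm h.symm)
    _ = ∑' n : ℕ, π * (r ^ (2*(n+1)) / ((n:ℝ)+1)^2) := by
        refine tsum_congr (fun n => ?_)
        simp only [eq_comm (a := n)]
        exact tsum_ite_eq n _
    _ = π * ∑' n : ℕ, r ^ (2*(n+1)) / ((n:ℝ)+1)^2 := by
        rw [tsum_mul_left]
end
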